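/- arXiv:1511.03738 — 7 statements merged into one kernel-verified Lean document; each statement's English description precedes it below -/
import Mathlib

section
/- Let S, q, k be natural numbers and a_1, ..., a_k natural numbers with sum S. Suppose min(a_1,...,a_k) ≥ q. Then the number of 0-1 matrices with k columns having column sums a_1,...,a_k, where q designated rows each have row sum k (all ones) and the remaining rows each have row sum at most 1, with total of S ones, equals (S - qk)! / ∏_{i=1}^k (a_i - q)!. Equivalently: the number of directed graphs (loops allowed) realizing the bidegree sequence with in-degrees (a_1,...,a_k,0,...,0) and out-degrees (k,...,k,1,...,1,0,...,0) (with q entries equal to k and S - qk entries equal to 1) is (S-qk)!/∏_i (a_i - q)!. -/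
/-- In-degree of node `v` in the directed graph with adjacency matrix `A`
(`A u v = true` means there is an edge `u → v`); loops are allowed. -/
def inDeg {N : ℕ} (A : Fin N → Fin N → Bool) (v : Fin N) : ℕ :=
  (Finset.univ.filter (fun u => A u v = true)).card

/-- Out-degree of node `v`. -/
def outDeg {N : ℕ} (A : Fin N → Fin N → Bool) (v : Fin N) : ℕ :=
  (Finset.univ.filter (fun u => A v u = true)).card

/-- Number of directed graphs (loops allowed, no multi-edges) realizing the
bidegree sequence with in-degrees `a` and out-degrees `b`. -/
noncomputable def numGraphs {N : ℕ} (a b : Fin N → ℕ) : ℕ :=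
  Nat.card {A : Fin N → Fin N → Bool // ∀ v, inDeg A v = a v ∧ outDeg A v = b v}

open Finset

private lemma cast_sigma_eq {k : ℕ} {c : Fin k → ℕ} (y : Σ j, Fin (c j)) (j : Fin k)
    (hc : c y.1 = c j) (h : y.1 = j) :
    (Sigma.mk j (Fin.cast hc y.2) : Σ j, Fin (c j)) = y := by
  obtain ⟨a, b⟩ := y
  subst h
  rfl

private def fiberEquiv {M k : ℕ} (c : Fin k → ℕ) (f : Fin M → Fin k) :
    {e : Fin M ≃ (Σ j, Fin (c j)) // ∀ x, (e x).1 = f x} ≃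
      ∀ j, {x : Fin M // f x = j} ≃ Fin (c j) where
  toFun e := fun j =>
    { toFun := fun x => Fin.cast (congrArg c ((e.2 x.1).trans x.2)) (e.1 x.1).2
      invFun := fun y => ⟨e.1.symm ⟨j, y⟩, by
        have h := e.2 (e.1.symm ⟨j, y⟩)
        rw [Equiv.apply_symm_apply] at h
        exact h.symm⟩
      left_inv := fun x => by
        apply Subtype.ext
        show e.1.symm ⟨j, _⟩ = _
        rw [cast_sigma_eq (e.1 x.1) j (congrArg c ((e.2 x.1).trans x.2)) ((e.2 x.1).trans x.2),
          Equiv.symm_apply_apply]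
      right_inv := fun y => by
        have key : ∀ (z : Σ j, Fin (c j)) (hz : z = ⟨j, y⟩) (hc : c z.1 = c j),
            Fin.cast hc z.2 = y := by
          rintro ⟨za, zb⟩ hz hc
          cases hz
          rfl
        exact key _ (e.1.apply_symm_apply ⟨j, y⟩) _ }
  invFun g := ⟨(Equiv.sigmaFiberEquiv f).symm.trans (Equiv.sigmaCongrRight g), fun x => rfl⟩
  left_inv e := by
    apply Subtype.ext
    apply Equiv.ext
    intro x
    exact cast_sigma_eq (e.1 x) (f x) (congrArg c (e.2 x)) (e.2 x)
  right_inv g := by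
    funext j
    apply Equiv.ext
    intro x
    obtain ⟨x, hx⟩ := x
    subst hx
    rfl

private lemma card_mul_eq (M k : ℕ) (c : Fin k → ℕ) (hc : ∑ j, c j = M) :
    Nat.card {f : Fin M → Fin k // ∀ j, (Finset.univ.filter fun x => f x = j).card = c j} *
      ∏ j, Nat.factorial (c j) = Nat.factorial M := by
  classical
  have hβ : Fintype.card (Σ j, Fin (c j)) = M := by simp [hc]
  have e0 : Fin M ≃ (Σ j, Fin (c j)) :=
    (finCongr hβ.symm).trans (Fintype.equivFin _).symm
  have h1 : Fintype.card (Fin M ≃ (Σ j, Fin (c j))) = Nat.factorial M := by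
    rw [Fintype.card_equiv e0, Fintype.card_fin]
  set π : (Fin M ≃ (Σ j, Fin (c j))) → (Fin M → Fin k) := fun e x => (e x).1 with hπ
  have h2 : Fintype.card (Fin M ≃ (Σ j, Fin (c j))) =
      ∑ f : Fin M → Fin k, Fintype.card {e // π e = f} := by
    rw [← Fintype.card_sigma]
    exact Fintype.card_congr (Equiv.sigmaFiberEquiv π).symm
  have h3 : ∀ f : Fin M → Fin k, Fintype.card {e // π e = f} =
      if (∀ j, (Finset.univ.filter fun x => f x = j).card = c j)
        then ∏ j, Nat.factorial (c j) else 0 := by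
    intro f
    have e1 : {e // π e = f} ≃ ∀ j, ({x : Fin M // f x = j} ≃ Fin (c j)) :=
      (Equiv.subtypeEquivRight (fun e => by simp [hπ, funext_iff])).trans (fiberEquiv c f)
    rw [Fintype.card_congr e1, Fintype.card_pi]
    by_cases h : ∀ j, (Finset.univ.filter fun x => f x = j).card = c j
    · rw [if_pos h]
      apply Finset.prod_congr rfl
      intro j _
      have hcard : Fintype.card {x : Fin M // f x = j} = c j := by
        rw [Fintype.card_subtype, h j]
      rw [Fintype.card_equiv ((Fintype.equivFinOfCardEq hcard)), hcard]
    · rw [if_neg h]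
      push_neg at h
      obtain ⟨j, hj⟩ := h
      apply Finset.prod_eq_zero (Finset.mem_univ j)
      rw [Fintype.card_eq_zero_iff]
      constructor
      intro e
      apply hj
      rw [← Fintype.card_subtype]
      rw [Fintype.card_congr e, Fintype.card_fin]
  rw [h2] at h1
  rw [← h1]
  simp only [h3]
  rw [Finset.sum_ite, Finset.sum_const_zero, add_zero, Finset.sum_const, smul_eq_mul]
  congr 1
  rw [Nat.card_eq_fintype_card, Fintype.card_subtype]

private def fNat (M k : ℕ) (f : Fin M → Fin k) (r : ℕ) : ℕ :=
  if h : r < M then (f ⟨r, h⟩ : ℕ) else k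

private lemma fNat_lt {M k : ℕ} (f : Fin M → Fin k) {r : ℕ} (h : r < M) :
    fNat M k f r < k := by
  rw [fNat, dif_pos h]; exact (f ⟨r, h⟩).isLt

private def matF (N q M k : ℕ) (f : Fin M → Fin k) : Fin N → Fin N → Bool :=
  fun u v => decide (((u : ℕ) < q ∧ (v : ℕ) < k) ∨
    (q ≤ (u : ℕ) ∧ (u : ℕ) < q + M ∧ (v : ℕ) = fNat M k f ((u : ℕ) - q)))

private lemma card_filter_coe_lt (N n : ℕ) (hn : n ≤ N) :
    (Finset.univ.filter fun v : Fin N => (v : ℕ) < n).card = n := by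
  have h : (Finset.univ.filter fun v : Fin N => (v : ℕ) < n) =
      (Finset.range n).attachFin (fun m hm => lt_of_lt_of_le (Finset.mem_range.mp hm) hn) := by
    ext v; simp
  rw [h, Finset.card_attachFin, Finset.card_range]

private lemma card_filter_shift (N q M : ℕ) (h : q + M ≤ N) (p : ℕ → Prop) [DecidablePred p] :
    (Finset.univ.filter fun u : Fin N => q ≤ (u:ℕ) ∧ (u:ℕ) < q + M ∧ p ((u:ℕ) - q)).card =
    (Finset.univ.filter fun r : Fin M => p (r:ℕ)).card := by
  refine Finset.card_bij'
    (fun u hu => (⟨(u:ℕ) - q, by simp only [Finset.mem_filter] at hu; omega⟩ : Fin M))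
    (fun r _ => (⟨q + (r:ℕ), by omega⟩ : Fin N)) ?_ ?_ ?_ ?_
  · intro u hu
    simp only [Finset.mem_filter, Finset.mem_univ, true_and] at hu ⊢
    exact hu.2.2
  · intro r hr
    simp only [Finset.mem_filter, Finset.mem_univ, true_and] at hr ⊢
    refine ⟨by omega, by omega, ?_⟩
    simpa [Nat.add_sub_cancel_left] using hr
  · intro u hu
    simp only [Finset.mem_filter] at hu
    apply Fin.ext
    simp only
    omega
  · intro r _
    apply Fin.ext
    simp [Nat.add_sub_cancel_left]

private lemma inDeg_matF (N q M k : ℕ) (hbN : q + M ≤ N)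
    (f : Fin M → Fin k) (v : Fin N) :
    inDeg (matF N q M k f) v =
      if (v : ℕ) < k then
        q + (Finset.univ.filter fun r : Fin M => ((f r : ℕ) = (v : ℕ))).card else 0 := by
  rw [inDeg]
  by_cases hv : (v : ℕ) < k
  · rw [if_pos hv]
    have hsplit : (Finset.univ.filter fun u : Fin N => matF N q M k f u v = true) =
        (Finset.univ.filter fun u : Fin N => (u : ℕ) < q) ∪
        (Finset.univ.filter fun u : Fin N =>
          q ≤ (u:ℕ) ∧ (u:ℕ) < q + M ∧ (v:ℕ) = fNat M k f ((u:ℕ) - q)) := by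
      ext u
      simp only [Finset.mem_filter, Finset.mem_univ, true_and, Finset.mem_union,
        matF, decide_eq_true_eq]
      constructor
      · rintro (⟨h1, _⟩ | h); exact Or.inl h1; exact Or.inr h
      · rintro (h | h); exact Or.inl ⟨h, hv⟩; exact Or.inr h
    rw [hsplit, Finset.card_union_of_disjoint]
    · congr 1
      · exact card_filter_coe_lt N q (by omega)
      · rw [card_filter_shift N q M hbN (fun r => (v:ℕ) = fNat M k f r)]
        congr 1
        apply Finset.filter_congr
        intro r _
        simp only [fNat, r.isLt, dif_pos, Fin.eta]
        exact eq_comm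
    · rw [Finset.disjoint_left]
      intro u hu hu'
      simp only [Finset.mem_filter] at hu hu'
      omega
  · rw [if_neg hv]
    rw [Finset.card_eq_zero]
    rw [Finset.filter_eq_empty_iff]
    intro u _
    simp only [matF, decide_eq_true_eq, not_or]
    constructor
    · rintro ⟨_, h⟩; omega
    · rintro ⟨h1, h2, h3⟩
      have h4 : (u:ℕ) - q < M := by omega
      have h5 := fNat_lt f (r := (u:ℕ) - q) h4
      omega

private lemma outDeg_matF (N q M k : ℕ) (hbN : q + M ≤ N) (hkN : k ≤ N)
    (f : Fin M → Fin k) (u : Fin N) :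
    outDeg (matF N q M k f) u =
      if (u : ℕ) < q then k else if (u : ℕ) < q + M then 1 else 0 := by
  rw [outDeg]
  by_cases hu : (u : ℕ) < q
  · rw [if_pos hu]
    have hsplit : (Finset.univ.filter fun v : Fin N => matF N q M k f u v = true) =
        (Finset.univ.filter fun v : Fin N => (v : ℕ) < k) := by
      ext v
      simp only [Finset.mem_filter, Finset.mem_univ, true_and, matF, decide_eq_true_eq]
      constructor
      · rintro (⟨_, h⟩ | ⟨h, _⟩); exact h; omega
      · intro h; exact Or.inl ⟨hu, h⟩
    rw [hsplit, card_filter_coe_lt N k hkN]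
  · rw [if_neg hu]
    by_cases hu2 : (u : ℕ) < q + M
    · rw [if_pos hu2]
      have h4 : (u:ℕ) - q < M := by omega
      have h5 := fNat_lt f (r := (u:ℕ) - q) h4
      have hsplit : (Finset.univ.filter fun v : Fin N => matF N q M k f u v = true) =
          {(⟨fNat M k f ((u:ℕ) - q), by omega⟩ : Fin N)} := by
        ext v
        simp only [Finset.mem_filter, Finset.mem_univ, true_and, matF, decide_eq_true_eq,
          Finset.mem_singleton, Fin.ext_iff]
        constructor
        · rintro (⟨h, _⟩ | ⟨_, _, h⟩); omega; exact h
        · intro h; exact Or.inr ⟨by omega, hu2, h⟩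
      rw [hsplit, Finset.card_singleton]
    · rw [if_neg hu2, Finset.card_eq_zero, Finset.filter_eq_empty_iff]
      intro v _
      simp only [matF, decide_eq_true_eq, not_or]
      exact ⟨by rintro ⟨h, _⟩; omega, by rintro ⟨_, h, _⟩; omega⟩

private lemma bool_eq_of_iff {x y : Bool} (h : x = true ↔ y = true) : x = y := by
  cases x <;> cases y <;> simp_all


/-- Lemma 1 (first case): with in-degrees `(a_1,…,a_k,0,…,0)` and out-degrees
consisting of `q` copies of `k`, `S - q·k` copies of `1` and zeros, where
`S = ∑ a_i` and `min a_i ≥ q`, the number of realizing directed graphs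
(loops allowed) equals `(S - q·k)! / ∏ i (a_i - q)!`. -/
theorem stmt_0 (N k q S : ℕ) (a : Fin k → ℕ)
    (hS : ∑ i, a i = S)
    (hq : ∀ i, q ≤ a i)
    (hqk : q * k ≤ S)
    (hkN : k ≤ N) (hbN : q + (S - q * k) ≤ N) :
    numGraphs
      (fun i : Fin N => if h : (i : ℕ) < k then a ⟨(i : ℕ), h⟩ else 0)
      (fun i : Fin N =>
        if (i : ℕ) < q then k else if (i : ℕ) < q + (S - q * k) then 1 else 0)
      = Nat.factorial (S - q * k) / ∏ i, Nat.factorial (a i - q) := by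
  classical
  have hc : ∑ j : Fin k, (a j - q) = S - q * k := by
    have h1 : ∑ j : Fin k, ((a j - q) + q) = ∑ j, a j :=
      Finset.sum_congr rfl (fun j _ => Nat.sub_add_cancel (hq j))
    rw [Finset.sum_add_distrib, Finset.sum_const, Finset.card_univ, Fintype.card_fin,
      smul_eq_mul, hS] at h1
    rw [Nat.mul_comm k q] at h1
    omega
  have Φprop : ∀ f : Fin (S - q * k) → Fin k,
      (∀ j : Fin k, (Finset.univ.filter fun x => f x = j).card = a j - q) →
      ∀ v : Fin N,
        inDeg (matF N q (S - q * k) k f) v = (if h : (v : ℕ) < k then a ⟨(v : ℕ), h⟩ else 0) ∧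
        outDeg (matF N q (S - q * k) k f) v =
          (if (v : ℕ) < q then k else if (v : ℕ) < q + (S - q * k) then 1 else 0) := by
    intro f hf v
    refine ⟨?_, outDeg_matF N q (S - q * k) k hbN hkN f v⟩
    rw [inDeg_matF N q (S - q * k) k hbN f v]
    by_cases hv : (v : ℕ) < k
    · rw [if_pos hv, dif_pos hv]
      have h2 : (Finset.univ.filter fun r => ((f r : ℕ) = (v : ℕ))).card = a ⟨(v : ℕ), hv⟩ - q := by
        rw [← hf ⟨(v : ℕ), hv⟩]
        congr 1
        apply Finset.filter_congr
        intro r _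
        simp [Fin.ext_iff]
      rw [h2]
      have := hq ⟨(v : ℕ), hv⟩
      omega
    · rw [if_neg hv, dif_neg hv]
  set Φ : {f : Fin (S - q * k) → Fin k //
        ∀ j : Fin k, (Finset.univ.filter fun x => f x = j).card = a j - q} →
      {A : Fin N → Fin N → Bool // ∀ v,
        inDeg A v = (fun i : Fin N => if h : (i : ℕ) < k then a ⟨(i : ℕ), h⟩ else 0) v ∧
        outDeg A v = (fun i : Fin N =>
          if (i : ℕ) < q then k else if (i : ℕ) < q + (S - q * k) then 1 else 0) v} :=
    fun fp => ⟨matF N q (S - q * k) k fp.1, fun v => Φprop fp.1 fp.2 v⟩ with hΦ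
  have hinj : Function.Injective Φ := by
    intro x y h
    have h' : matF N q (S - q * k) k x.1 = matF N q (S - q * k) k y.1 := congrArg Subtype.val h
    apply Subtype.ext
    funext r
    have hrlt : q + (r : ℕ) < q + (S - q * k) := by have := r.isLt; omega
    have hx : matF N q (S - q * k) k x.1 ⟨q + (r : ℕ), by omega⟩
        ⟨(x.1 r : ℕ), by have := (x.1 r).isLt; omega⟩ = true := by
      simp only [matF, decide_eq_true_eq]
      refine Or.inr ⟨by omega, by omega, ?_⟩
      simp [fNat, Nat.add_sub_cancel_left, r.isLt, Fin.eta]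
    rw [h'] at hx
    simp only [matF, decide_eq_true_eq] at hx
    rcases hx with ⟨h1, _⟩ | ⟨_, _, h3⟩
    · omega
    · simp only [Nat.add_sub_cancel_left, fNat, r.isLt, dif_pos, Fin.eta] at h3
      exact Fin.ext h3
  have hsurj : Function.Surjective Φ := by
    rintro ⟨A, hA⟩
    have hcol : ∀ v : Fin N, k ≤ (v : ℕ) → ∀ u, A u v ≠ true := by
      intro v hv u hu
      have h1 : inDeg A v = if h : (v : ℕ) < k then a ⟨(v : ℕ), h⟩ else 0 := (hA v).1
      rw [dif_neg (by omega)] at h1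
      rw [inDeg, Finset.card_eq_zero, Finset.filter_eq_empty_iff] at h1
      exact h1 (Finset.mem_univ u) hu
    have hrow0 : ∀ u : Fin N, q + (S - q * k) ≤ (u : ℕ) → ∀ v, A u v ≠ true := by
      intro u hu v hv
      have h1 : outDeg A u = if (u : ℕ) < q then k else if (u : ℕ) < q + (S - q * k) then 1 else 0 :=
        (hA u).2
      rw [if_neg (by omega), if_neg (by omega)] at h1
      rw [outDeg, Finset.card_eq_zero, Finset.filter_eq_empty_iff] at h1
      exact h1 (Finset.mem_univ v) hv
    have hrow1 : ∀ u : Fin N, (u : ℕ) < q → ∀ v : Fin N, (v : ℕ) < k → A u v = true := by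
      intro u hu v hv
      have h1 : outDeg A u = if (u : ℕ) < q then k else if (u : ℕ) < q + (S - q * k) then 1 else 0 :=
        (hA u).2
      rw [if_pos hu] at h1
      have hsub : (Finset.univ.filter fun w => A u w = true) ⊆
          (Finset.univ.filter fun w : Fin N => (w : ℕ) < k) := by
        intro w hw
        simp only [Finset.mem_filter, Finset.mem_univ, true_and] at hw ⊢
        by_contra hcon
        exact hcol w (by omega) u hw
      have heq := Finset.eq_of_subset_of_card_le hsub (by
        rw [card_filter_coe_lt N k hkN]
        rw [outDeg] at h1
        omega)
      have hv2 : v ∈ (Finset.univ.filter fun w : Fin N => (w : ℕ) < k) := by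
        simp [hv]
      rw [← heq] at hv2
      simpa using hv2
    have hmid : ∀ r : Fin (S - q * k), ∃ w : Fin N,
        (Finset.univ.filter fun v => A ⟨q + (r : ℕ), by have := r.isLt; omega⟩ v = true) = {w} := by
      intro r
      have h1 : outDeg A ⟨q + (r : ℕ), by have := r.isLt; omega⟩ =
          if q + (r : ℕ) < q then k else if q + (r : ℕ) < q + (S - q * k) then 1 else 0 :=
        (hA ⟨q + (r : ℕ), by have := r.isLt; omega⟩).2
      rw [if_neg (by omega), if_pos (by have := r.isLt; omega)] at h1
      rw [outDeg] at h1
      exact Finset.card_eq_one.mp h1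
    choose w hw using hmid
    have hwmem : ∀ r : Fin (S - q * k),
        A ⟨q + (r : ℕ), by have := r.isLt; omega⟩ (w r) = true := by
      intro r
      have h1 : w r ∈ ({w r} : Finset (Fin N)) := Finset.mem_singleton_self _
      rw [← hw r] at h1
      simpa using h1
    have hwk : ∀ r, (w r : ℕ) < k := by
      intro r
      by_contra hcon
      exact hcol (w r) (by omega) _ (hwmem r)
    set f : Fin (S - q * k) → Fin k := fun r => ⟨(w r : ℕ), hwk r⟩ with hfdef
    have hAeq : A = matF N q (S - q * k) k f := by
      funext u v
      apply bool_eq_of_iff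
      simp only [matF, decide_eq_true_eq]
      constructor
      · intro hA1
        have hvk : (v : ℕ) < k := by
          by_contra hcon
          exact hcol v (by omega) u hA1
        by_cases hu : (u : ℕ) < q
        · exact Or.inl ⟨hu, hvk⟩
        · have hu2 : (u : ℕ) < q + (S - q * k) := by
            by_contra hcon
            exact hrow0 u (by omega) v hA1
          refine Or.inr ⟨by omega, hu2, ?_⟩
          have hr : (u : ℕ) - q < S - q * k := by omega
          have hu' : u = ⟨q + ((⟨(u : ℕ) - q, hr⟩ : Fin (S - q * k)) : ℕ),
              by simp; omega⟩ := Fin.ext (by simp; omega)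
          rw [hu'] at hA1
          have hv3 : v ∈ ({w ⟨(u : ℕ) - q, hr⟩} : Finset (Fin N)) := by
            rw [← hw ⟨(u : ℕ) - q, hr⟩]
            simp only [Finset.mem_filter, Finset.mem_univ, true_and]
            exact hA1
          have hv2 : v = w ⟨(u : ℕ) - q, hr⟩ := by simpa using hv3
          rw [hv2]
          simp [fNat, hr, hfdef]
      · rintro (⟨h1, h2⟩ | ⟨h1, h2, h3⟩)
        · exact hrow1 u h1 v h2
        · have hr : (u : ℕ) - q < S - q * k := by omega
          have hv2 : v = w ⟨(u : ℕ) - q, hr⟩ := by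
            apply Fin.ext
            rw [h3]
            simp [fNat, hr, hfdef]
          have hu' : u = ⟨q + ((⟨(u : ℕ) - q, hr⟩ : Fin (S - q * k)) : ℕ),
              by simp; omega⟩ := Fin.ext (by simp; omega)
          rw [hu', hv2]
          exact hwmem _
    have hf : ∀ j : Fin k, (Finset.univ.filter fun x => f x = j).card = a j - q := by
      intro j
      have hjN : (j : ℕ) < N := lt_of_lt_of_le j.isLt hkN
      have h1 : inDeg A ⟨(j : ℕ), hjN⟩ = if h : (j : ℕ) < k then a ⟨(j : ℕ), h⟩ else 0 :=
        (hA ⟨(j : ℕ), hjN⟩).1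
      rw [hAeq, inDeg_matF N q (S - q * k) k hbN] at h1
      rw [if_pos (show ((⟨(j : ℕ), hjN⟩ : Fin N) : ℕ) < k from j.isLt)] at h1
      rw [dif_pos (show (j : ℕ) < k from j.isLt)] at h1
      have h2 : (Finset.univ.filter fun r => ((f r : ℕ) = ((⟨(j : ℕ), hjN⟩ : Fin N) : ℕ))).card =
          (Finset.univ.filter fun x => f x = j).card := by
        congr 1
        apply Finset.filter_congr
        intro r _
        simp [Fin.ext_iff]
      have h3 : a ⟨(j : ℕ), j.isLt⟩ = a j := by
        rw [Fin.eta]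
      rw [h2, h3] at h1
      have := hq j
      omega
    exact ⟨⟨f, hf⟩, Subtype.ext hAeq.symm⟩
  have e : {f : Fin (S - q * k) → Fin k //
        ∀ j : Fin k, (Finset.univ.filter fun x => f x = j).card = a j - q} ≃
      {A : Fin N → Fin N → Bool // ∀ v,
        inDeg A v = (fun i : Fin N => if h : (i : ℕ) < k then a ⟨(i : ℕ), h⟩ else 0) v ∧
        outDeg A v = (fun i : Fin N =>
          if (i : ℕ) < q then k else if (i : ℕ) < q + (S - q * k) then 1 else 0) v} :=
    Equiv.ofBijective Φ ⟨hinj, hsurj⟩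
  have hmul := card_mul_eq (S - q * k) k (fun j => a j - q) hc
  have hpos : 0 < ∏ j : Fin k, Nat.factorial (a j - q) :=
    Finset.prod_pos (fun j _ => Nat.factorial_pos _)
  beta_reduce at hmul
  rw [numGraphs, ← Nat.card_congr e, ← hmul, Nat.mul_div_cancel _ hpos]
end

section
/- With the same setup (in-degrees (a_1,...,a_k,0,...,0) and out-degrees consisting of q copies of k, S-qk copies of 1, and the rest 0, where Σ_{i=1}^k a_i = S), if min(a_1,...,a_k) < q then there exists no directed graph (loops allowed) realizing this bidegree sequence. -/
lemma card_filter_lt {N m : ℕ} (h : m ≤ N) :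
    (Finset.univ.filter (fun v : Fin N => (v : ℕ) < m)).card = m := by
  have : Finset.univ.filter (fun v : Fin N => (v : ℕ) < m)
      = Finset.univ.map (Fin.castLEEmb h) := by
    ext v
    simp only [Finset.mem_filter, Finset.mem_univ, true_and, Finset.mem_map]
    constructor
    · intro hv
      exact ⟨⟨v, hv⟩, rfl⟩
    · rintro ⟨w, rfl⟩
      exact w.isLt
  rw [this, Finset.card_map, Finset.card_univ, Fintype.card_fin]

/-- Lemma 1 (non-existence case): with in-degrees `(a_1,…,a_k,0,…,0)` and
out-degrees consisting of `q` copies of `k`, `S - q·k` copies of `1` and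
zeros, where `S = ∑ a_i`, if some `a_i < q` then no directed graph (loops
allowed) realizes the bidegree sequence. -/
theorem stmt_1 (N k q S : ℕ) (a : Fin k → ℕ)
    (hS : ∑ i, a i = S)
    (hq : ∃ i, a i < q)
    (hqk : q * k ≤ S)
    (hkN : k ≤ N) (hbN : q + (S - q * k) ≤ N) :
    numGraphs
      (fun i : Fin N => if h : (i : ℕ) < k then a ⟨(i : ℕ), h⟩ else 0)
      (fun i : Fin N =>
        if (i : ℕ) < q then k else if (i : ℕ) < q + (S - q * k) then 1 else 0)
      = 0 := by
  rw [numGraphs, Nat.card_eq_zero]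
  left
  constructor
  rintro ⟨A, hA⟩
  obtain ⟨i, hi⟩ := hq
  have hqN : q ≤ N := le_trans (Nat.le_add_right _ _) hbN
  -- every node `u` with `u < q` has edges to all nodes `v < k`
  have key : ∀ u v : Fin N, (u : ℕ) < q → (v : ℕ) < k → A u v = true := by
    intro u v hu hv
    have hout : outDeg A u = k := by
      have := (hA u).2
      simpa [hu] using this
    have hsub : Finset.univ.filter (fun w => A u w = true) ⊆
        Finset.univ.filter (fun w : Fin N => (w : ℕ) < k) := by
      intro w hw
      simp only [Finset.mem_filter, Finset.mem_univ, true_and] at hw ⊢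
      by_contra hwk
      have hin0 : inDeg A w = 0 := by
        have := (hA w).1
        simpa [hwk] using this
      have : u ∈ Finset.univ.filter (fun x => A x w = true) := by
        simp [hw]
      have : 0 < inDeg A w := Finset.card_pos.mpr ⟨u, this⟩
      omega
    have heq : Finset.univ.filter (fun w => A u w = true)
        = Finset.univ.filter (fun w : Fin N => (w : ℕ) < k) := by
      apply Finset.eq_of_subset_of_card_le hsub
      rw [card_filter_lt hkN]
      exact le_of_eq hout.symm
    have : v ∈ Finset.univ.filter (fun w => A u w = true) := by
      rw [heq]; simp [hv]
    simpa using this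
  -- node i has in-degree a i but receives edges from all q heavy nodes
  set v : Fin N := ⟨(i : ℕ), lt_of_lt_of_le i.isLt hkN⟩ with hv
  have hin : inDeg A v = a i := by
    have := (hA v).1
    simpa [hv, i.isLt] using this
  have hsub : Finset.univ.filter (fun u : Fin N => (u : ℕ) < q) ⊆
      Finset.univ.filter (fun u => A u v = true) := by
    intro u hu
    simp only [Finset.mem_filter, Finset.mem_univ, true_and] at hu ⊢
    exact key u v hu i.isLt
  have hcard : q ≤ inDeg A v := by
    calc q = (Finset.univ.filter (fun u : Fin N => (u : ℕ) < q)).card :=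
        (card_filter_lt hqN).symm
      _ ≤ _ := Finset.card_le_card hsub
  omega
end

section
/- Fix a bidegree sequence d = (a,b) ∈ ℤ^{N×2} and two indices i, j with in-degrees a_i ≥ a_j. For 0 ≤ k ≤ a_j, let X_k denote the set of residual bidegree sequences (a - a_i·e_i - a_j·e_j, b - s) where s ∈ ℤ^N satisfies: exactly k entries of s equal 2, no entry of s exceeds 2, all entries nonnegative, and Σ_n s_n = a_i + a_j. Let ‖G_d‖ denote the number of directed graphs (loops allowed, no multi-edges) realizing d and ‖G_{X_k}‖ the total number of graphs realizing any sequence in X_k. Then ‖G_d‖ = Σ_{k=0}^{a_j} C(a_i + a_j - 2k, a_j - k) · ‖G_{X_k}‖. -/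
/-- Number of directed graphs (loops allowed, no multi-edges) realizing the
integer bidegree sequence `(a,b)` (no graph realizes a sequence with a
negative entry). -/
noncomputable def numGraphsZ {N : ℕ} (a b : Fin N → ℤ) : ℕ :=
  Nat.card {A : Fin N → Fin N → Bool //
    ∀ v, (inDeg A v : ℤ) = a v ∧ (outDeg A v : ℤ) = b v}

lemma numGraphsZ_eq_card {N : ℕ} (a b : Fin N → ℤ) :
    numGraphsZ a b = (Finset.univ.filter (fun A : Fin N → Fin N → Bool =>
      ∀ v, (inDeg A v : ℤ) = a v ∧ (outDeg A v : ℤ) = b v)).card := by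
  rw [numGraphsZ, Nat.card_eq_fintype_card, Fintype.card_subtype]

/-- The pair profile of node `n` w.r.t. columns `i`, `j`. -/
def SF {N : ℕ} (i j : Fin N) (A : Fin N → Fin N → Bool) (n : Fin N) : Fin 3 :=
  if A n i then (if A n j then 2 else 1) else (if A n j then 1 else 0)

lemma SF_val {N : ℕ} (i j : Fin N) (A : Fin N → Fin N → Bool) (n : Fin N) :
    ((SF i j A n : Fin 3) : ℕ) =
      (if A n i = true then 1 else 0) + (if A n j = true then 1 else 0) := by
  unfold SF; split_ifs <;> rfl

lemma sum_split_two {N : ℕ} (i j : Fin N) (hij : i ≠ j) (f : Fin N → ℕ) :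
    ∑ u, f u = (∑ u, if u = i ∨ u = j then 0 else f u) + f i + f j := by
  have h : ∀ u : Fin N, f u = (if u = i ∨ u = j then 0 else f u)
      + (if u = i then f i else 0) + (if u = j then f j else 0) := by
    intro u
    by_cases h1 : u = i <;> by_cases h2 : u = j
    · exact absurd (h1.symm.trans h2) hij
    · simp [h1, h2, hij, Ne.symm hij]
    · simp [h1, h2, hij, Ne.symm hij]
    · simp [h1, h2]
  rw [Finset.sum_congr rfl fun u _ => h u]
  simp [Finset.sum_add_distrib, Finset.sum_ite_eq']

lemma key_facts {N : ℕ} (a b : Fin N → ℕ) (i j : Fin N)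
    (s : Fin N → Fin 3) (A : Fin N → Fin N → Bool)
    (hA : ∀ v, inDeg A v = a v ∧ outDeg A v = b v) (hSF : SF i j A = s) :
    (∑ n, (s n : ℕ)) = a i + a j ∧
    (Finset.univ.filter (fun n => (s n : ℕ) = 2)).card
      + (Finset.univ.filter (fun n => A n j = true ∧ (s n : ℕ) = 1)).card = a j := by
  have hval : ∀ n, (s n : ℕ)
      = (if A n i = true then 1 else 0) + (if A n j = true then 1 else 0) := by
    intro n; rw [← hSF]; exact SF_val i j A n
  constructor
  · have h1 : inDeg A i = a i := (hA i).1
    have h2 : inDeg A j = a j := (hA j).1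
    rw [← h1, ← h2, inDeg, inDeg, Finset.card_filter, Finset.card_filter,
      ← Finset.sum_add_distrib]
    exact Finset.sum_congr rfl fun n _ => hval n
  · have h2 : inDeg A j = a j := (hA j).1
    rw [← h2, inDeg, Finset.card_filter, Finset.card_filter, Finset.card_filter,
      ← Finset.sum_add_distrib]
    refine Finset.sum_congr rfl fun n _ => ?_
    have hv := hval n
    by_cases h1 : A n i = true <;> by_cases h3 : A n j = true <;>
      simp [h1, h3] at hv ⊢ <;> simp [hv]

lemma card_as_sum {N : ℕ} (T : Finset (Fin N)) :
    T.card = ∑ n : Fin N, if n ∈ T then 1 else 0 := by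
  rw [Finset.sum_ite_mem, Finset.univ_inter, Finset.card_eq_sum_ones]

def fwdMap {N : ℕ} (i j : Fin N) (s : Fin N → Fin 3) (A : Fin N → Fin N → Bool) :
    Finset (Fin N) × (Fin N → Fin N → Bool) :=
  (Finset.univ.filter (fun n => A n j = true ∧ (s n : ℕ) = 1),
   fun n v => if v = i ∨ v = j then false else A n v)

def bwdMap {N : ℕ} (i j : Fin N) (s : Fin N → Fin 3)
    (p : Finset (Fin N) × (Fin N → Fin N → Bool)) : Fin N → Fin N → Bool :=
  fun n v =>
    if v = i then decide ((s n : ℕ) = 2 ∨ ((s n : ℕ) = 1 ∧ n ∉ p.1))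
    else if v = j then decide ((s n : ℕ) = 2 ∨ ((s n : ℕ) = 1 ∧ n ∈ p.1))
    else p.2 n v

lemma bwdMap_i {N : ℕ} (i j : Fin N) (s : Fin N → Fin 3) (p) (n : Fin N) :
    bwdMap i j s p n i = decide ((s n : ℕ) = 2 ∨ ((s n : ℕ) = 1 ∧ n ∉ p.1)) := by
  simp [bwdMap]

lemma bwdMap_j {N : ℕ} {i j : Fin N} (hij : i ≠ j) (s : Fin N → Fin 3) (p) (n : Fin N) :
    bwdMap i j s p n j = decide ((s n : ℕ) = 2 ∨ ((s n : ℕ) = 1 ∧ n ∈ p.1)) := by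
  simp [bwdMap, Ne.symm hij]

lemma bwdMap_other {N : ℕ} {i j v : Fin N} (s : Fin N → Fin 3) (p) (n : Fin N)
    (hv1 : v ≠ i) (hv2 : v ≠ j) : bwdMap i j s p n v = p.2 n v := by
  simp [bwdMap, hv1, hv2]

lemma fwd_mem {N : ℕ} (a b : Fin N → ℕ) {i j : Fin N} (hij : i ≠ j)
    (s : Fin N → Fin 3) (A : Fin N → Fin N → Bool)
    (hreal : ∀ v, inDeg A v = a v ∧ outDeg A v = b v) (hSF : SF i j A = s) :
    ((fwdMap i j s A).1 ⊆ Finset.univ.filter (fun n => (s n : ℕ) = 1) ∧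
      (fwdMap i j s A).1.card
        = a j - (Finset.univ.filter (fun n => (s n : ℕ) = 2)).card) ∧
    (∀ v, (inDeg (fwdMap i j s A).2 v = if v = i ∨ v = j then 0 else a v)
      ∧ outDeg (fwdMap i j s A).2 v + (s v : ℕ) = b v) := by
  obtain ⟨-, hTj⟩ := key_facts a b i j s A hreal hSF
  have hval : ∀ n, (s n : ℕ)
      = (if A n i = true then 1 else 0) + (if A n j = true then 1 else 0) := by
    intro n; rw [← hSF]; exact SF_val i j A n
  refine ⟨⟨fun n hn => ?_, by simp only [fwdMap]; omega⟩, fun v => ⟨?_, ?_⟩⟩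
  · simp only [fwdMap, Finset.mem_filter, Finset.mem_univ, true_and] at hn ⊢
    exact hn.2
  · by_cases hv : v = i ∨ v = j
    · rw [if_pos hv, inDeg]
      rw [show (Finset.univ.filter (fun u => (fwdMap i j s A).2 u v = true)) = ∅ from
        Finset.filter_eq_empty_iff.mpr (fun u _ => by
          simp only [fwdMap]; rw [if_pos hv]; simp)]
      simp
    · rw [if_neg hv, ← (hreal v).1, inDeg, inDeg]
      congr 1
      ext u
      simp only [fwdMap, hv, if_false]
  · have hb : outDeg A v = b v := (hreal v).2
    rw [outDeg, Finset.card_filter,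
      sum_split_two i j hij (fun u => if A v u = true then 1 else 0)] at hb
    rw [outDeg, Finset.card_filter]
    have e1 : (∑ u, if (fwdMap i j s A).2 v u = true then 1 else 0)
        = ∑ u, if u = i ∨ u = j then 0 else (if A v u = true then 1 else 0) := by
      refine Finset.sum_congr rfl fun u _ => ?_
      by_cases hu : u = i ∨ u = j
      · simp only [fwdMap, hu, if_true]; simp
      · simp only [fwdMap, hu, if_false]
    rw [e1]
    have hv := hval v
    omega

lemma bwd_mem {N : ℕ} (a b : Fin N → ℕ) {i j : Fin N} (hij : i ≠ j) (hji : a j ≤ a i)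
    (s : Fin N → Fin 3) (T : Finset (Fin N)) (B : Fin N → Fin N → Bool)
    (hc2 : (Finset.univ.filter (fun n => (s n : ℕ) = 2)).card ≤ a j)
    (hones : (Finset.univ.filter (fun n => (s n : ℕ) = 1)).card
      + 2 * (Finset.univ.filter (fun n => (s n : ℕ) = 2)).card = a i + a j)
    (hTsub : T ⊆ Finset.univ.filter (fun n => (s n : ℕ) = 1))
    (hTcard : T.card = a j - (Finset.univ.filter (fun n => (s n : ℕ) = 2)).card)
    (hB : ∀ v, (inDeg B v = if v = i ∨ v = j then 0 else a v)
      ∧ outDeg B v + (s v : ℕ) = b v) :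
    (∀ v, inDeg (bwdMap i j s (T, B)) v = a v ∧ outDeg (bwdMap i j s (T, B)) v = b v)
      ∧ SF i j (bwdMap i j s (T, B)) = s := by
  set c2 := (Finset.univ.filter (fun n => (s n : ℕ) = 2)).card with hc2def
  have hTones : ∀ n ∈ T, (s n : ℕ) = 1 := by
    intro n hn
    have := hTsub hn
    simp only [Finset.mem_filter, Finset.mem_univ, true_and] at this
    exact this
  have hBfalse : ∀ n, B n i = false ∧ B n j = false := by
    intro n
    have h1 : inDeg B i = 0 := by rw [(hB i).1, if_pos (Or.inl rfl)]
    have h2 : inDeg B j = 0 := by rw [(hB j).1, if_pos (Or.inr rfl)]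
    rw [inDeg, Finset.card_eq_zero, Finset.filter_eq_empty_iff] at h1 h2
    exact ⟨Bool.eq_false_iff.mpr (h1 (Finset.mem_univ n)),
      Bool.eq_false_iff.mpr (h2 (Finset.mem_univ n))⟩
  -- the two special columns of bwdMap, pointwise sum equals s n
  have hDij : ∀ n, (if bwdMap i j s (T, B) n i = true then 1 else 0)
      + (if bwdMap i j s (T, B) n j = true then 1 else 0) = (s n : ℕ) := by
    intro n
    rw [bwdMap_i, bwdMap_j hij]
    have h3 : (s n : ℕ) < 3 := (s n).isLt
    by_cases hn : n ∈ T
    · have h1 : (s n : ℕ) = 1 := hTones n hn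
      simp [h1, hn]
    · by_cases h2 : (s n : ℕ) = 2
      · simp [h2]
      · by_cases h1 : (s n : ℕ) = 1
        · simp [h1, hn]
        · have h0 : (s n : ℕ) = 0 := by omega
          simp [h0]
  constructor
  · intro v
    constructor
    · -- in-degrees
      by_cases hvi : v = i
      · rw [hvi]
        -- count of column i
        have e : inDeg (bwdMap i j s (T, B)) i
              + T.card
            = c2 + (Finset.univ.filter (fun n => (s n : ℕ) = 1)).card := by
          rw [inDeg, Finset.card_filter, card_as_sum T, hc2def, Finset.card_filter,
            Finset.card_filter, ← Finset.sum_add_distrib, ← Finset.sum_add_distrib]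
          refine Finset.sum_congr rfl fun n _ => ?_
          rw [bwdMap_i]
          by_cases hn : n ∈ T
          · have h1 : (s n : ℕ) = 1 := hTones n hn
            simp [h1, hn]
          · by_cases h2 : (s n : ℕ) = 2
            · simp [h2, hn]
            · by_cases h1 : (s n : ℕ) = 1
              · simp [h1, h2, hn]
              · simp [h1, h2, hn]
        omega
      · by_cases hvj : v = j
        · rw [hvj]
          have e : inDeg (bwdMap i j s (T, B)) j
              = c2 + T.card := by
            rw [inDeg, Finset.card_filter, card_as_sum T, hc2def, Finset.card_filter,
              ← Finset.sum_add_distrib]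
            refine Finset.sum_congr rfl fun n _ => ?_
            rw [bwdMap_j hij]
            by_cases hn : n ∈ T
            · have h1 : (s n : ℕ) = 1 := hTones n hn
              simp [h1, hn]
            · by_cases h2 : (s n : ℕ) = 2
              · simp [h2, hn]
              · simp [h2, hn]
          omega
        · have e : inDeg (bwdMap i j s (T, B)) v = inDeg B v := by
            rw [inDeg, inDeg]
            congr 1
            ext u
            simp only [Finset.mem_filter, Finset.mem_univ, true_and]
            rw [bwdMap_other s (T, B) u hvi hvj]
          rw [e, (hB v).1, if_neg (by tauto)]
    · -- out-degrees
      have hb := (hB v).2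
      rw [outDeg, Finset.card_filter] at hb ⊢
      rw [sum_split_two i j hij (fun u => if bwdMap i j s (T, B) v u = true then 1 else 0)]
      have e1 : (∑ u, if u = i ∨ u = j then 0
            else (if bwdMap i j s (T, B) v u = true then 1 else 0))
          = ∑ u, if B v u = true then 1 else 0 := by
        refine Finset.sum_congr rfl fun u _ => ?_
        by_cases hu : u = i ∨ u = j
        · rw [if_pos hu]
          rcases hu with h | h <;> subst h <;>
            simp [(hBfalse v).1, (hBfalse v).2]
        · push_neg at hu
          rw [if_neg (by tauto), bwdMap_other s (T, B) v hu.1 hu.2]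
      rw [e1]
      have := hDij v
      omega
  · -- SF equals s
    funext n
    have hv : ((SF i j (bwdMap i j s (T, B)) n : Fin 3) : ℕ) = ((s n : Fin 3) : ℕ) := by
      rw [SF_val, hDij n]
    exact Fin.val_injective hv

lemma left_inv_lemma {N : ℕ} {i j : Fin N} (hij : i ≠ j) (s : Fin N → Fin 3)
    (A : Fin N → Fin N → Bool) (hSF : SF i j A = s) :
    bwdMap i j s (fwdMap i j s A) = A := by
  have hval : ∀ n, (s n : ℕ)
      = (if A n i = true then 1 else 0) + (if A n j = true then 1 else 0) := by
    intro n; rw [← hSF]; exact SF_val i j A n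
  funext n v
  by_cases hvi : v = i
  · rw [hvi, bwdMap_i]
    have hv := hval n
    cases hAi : A n i <;> cases hAj : A n j <;> simp [hAi, hAj] at hv <;>
      simp [fwdMap, Finset.mem_filter, hv, hAi, hAj]
  · by_cases hvj : v = j
    · rw [hvj, bwdMap_j hij]
      have hv := hval n
      cases hAi : A n i <;> cases hAj : A n j <;> simp [hAi, hAj] at hv <;>
        simp [fwdMap, Finset.mem_filter, hv, hAi, hAj]
    · rw [bwdMap_other s _ n hvi hvj]
      simp only [fwdMap]
      rw [if_neg (by tauto)]

lemma right_inv_lemma {N : ℕ} (a b : Fin N → ℕ) {i j : Fin N} (hij : i ≠ j)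
    (s : Fin N → Fin 3) (T : Finset (Fin N)) (B : Fin N → Fin N → Bool)
    (hTsub : T ⊆ Finset.univ.filter (fun n => (s n : ℕ) = 1))
    (hB : ∀ v, (inDeg B v = if v = i ∨ v = j then 0 else a v)
      ∧ outDeg B v + (s v : ℕ) = b v) :
    fwdMap i j s (bwdMap i j s (T, B)) = (T, B) := by
  have hTones : ∀ n ∈ T, (s n : ℕ) = 1 := by
    intro n hn; have := hTsub hn
    simp only [Finset.mem_filter, Finset.mem_univ, true_and] at this; exact this
  have hBfalse : ∀ n, B n i = false ∧ B n j = false := by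
    intro n
    have h1 : inDeg B i = 0 := by rw [(hB i).1, if_pos (Or.inl rfl)]
    have h2 : inDeg B j = 0 := by rw [(hB j).1, if_pos (Or.inr rfl)]
    rw [inDeg, Finset.card_eq_zero, Finset.filter_eq_empty_iff] at h1 h2
    exact ⟨Bool.eq_false_iff.mpr (h1 (Finset.mem_univ n)),
      Bool.eq_false_iff.mpr (h2 (Finset.mem_univ n))⟩
  have h1 : (fwdMap i j s (bwdMap i j s (T, B))).1 = T := by
    simp only [fwdMap]
    ext n
    simp only [Finset.mem_filter, Finset.mem_univ, true_and, bwdMap_j hij,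
      decide_eq_true_eq]
    constructor
    · rintro ⟨h | ⟨-, hn⟩, h2⟩
      · omega
      · exact hn
    · intro hn
      exact ⟨Or.inr ⟨hTones n hn, hn⟩, hTones n hn⟩
  have h2 : (fwdMap i j s (bwdMap i j s (T, B))).2 = B := by
    funext n v
    show (if v = i ∨ v = j then false else bwdMap i j s (T, B) n v) = B n v
    by_cases hv : v = i ∨ v = j
    · rw [if_pos hv]
      rcases hv with rfl | rfl
      · exact ((hBfalse n).1).symm
      · exact ((hBfalse n).2).symm
    · push_neg at hv
      rw [if_neg (by tauto), bwdMap_other s (T, B) n hv.1 hv.2]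
  exact Prod.ext h1 h2

lemma fiber_card {N : ℕ} (a b : Fin N → ℕ) (i j : Fin N) (hij : i ≠ j) (hji : a j ≤ a i)
    (s : Fin N → Fin 3) :
    (Finset.univ.filter (fun A : Fin N → Fin N → Bool =>
        (∀ v, inDeg A v = a v ∧ outDeg A v = b v) ∧ SF i j A = s)).card =
    if (∑ n, (s n : ℕ)) = a i + a j ∧
        (Finset.univ.filter (fun n => (s n : ℕ) = 2)).card ≤ a j then
      Nat.choose (a i + a j - 2 * (Finset.univ.filter (fun n => (s n : ℕ) = 2)).card)
        (a j - (Finset.univ.filter (fun n => (s n : ℕ) = 2)).card) *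
      (Finset.univ.filter (fun B : Fin N → Fin N → Bool =>
        ∀ v, (inDeg B v = if v = i ∨ v = j then 0 else a v)
          ∧ outDeg B v + (s v : ℕ) = b v)).card
    else 0 := by
  classical
  set c2 := (Finset.univ.filter (fun n => (s n : ℕ) = 2)).card with hc2def
  split_ifs with hcond
  · obtain ⟨hsum, hc2⟩ := hcond
    have hones : (Finset.univ.filter (fun n => (s n : ℕ) = 1)).card + 2 * c2
        = a i + a j := by
      rw [← hsum, hc2def, Finset.card_filter, Finset.card_filter, Finset.mul_sum,
        ← Finset.sum_add_distrib]
      refine Finset.sum_congr rfl fun n _ => ?_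
      have h3 : (s n : ℕ) < 3 := (s n).isLt
      split_ifs <;> omega
    set resSet := Finset.univ.filter (fun B : Fin N → Fin N → Bool =>
        ∀ v, (inDeg B v = if v = i ∨ v = j then 0 else a v)
          ∧ outDeg B v + (s v : ℕ) = b v) with hresdef
    have hprod : ((Finset.powersetCard (a j - c2)
          (Finset.univ.filter (fun n => (s n : ℕ) = 1))) ×ˢ resSet).card
        = Nat.choose (a i + a j - 2 * c2) (a j - c2) * resSet.card := by
      rw [Finset.card_product, Finset.card_powersetCard]
      congr 2
      omega
    rw [← hprod]
    refine Finset.card_nbij' (fwdMap i j s) (bwdMap i j s) ?_ ?_ ?_ ?_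
    · intro A hA
      simp only [Finset.mem_coe, Finset.mem_filter, Finset.mem_univ, true_and] at hA
      obtain ⟨hfst, hsnd⟩ := fwd_mem a b hij s A hA.1 hA.2
      rw [Finset.mem_coe, Finset.mem_product, Finset.mem_powersetCard, hresdef]
      exact ⟨⟨hfst.1, hfst.2⟩, Finset.mem_filter.mpr ⟨Finset.mem_univ _, hsnd⟩⟩
    · rintro ⟨T, B⟩ hp
      rw [Finset.mem_coe, Finset.mem_product, Finset.mem_powersetCard, hresdef] at hp
      obtain ⟨⟨hTsub, hTcard⟩, hBmem⟩ := hp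
      have hB := (Finset.mem_filter.mp hBmem).2
      simp only [Finset.mem_coe, Finset.mem_filter, Finset.mem_univ, true_and]
      exact bwd_mem a b hij hji s T B hc2 hones hTsub hTcard hB
    · intro A hA
      simp only [Finset.mem_coe, Finset.mem_filter, Finset.mem_univ, true_and] at hA
      exact left_inv_lemma hij s A hA.2
    · rintro ⟨T, B⟩ hp
      rw [Finset.mem_coe, Finset.mem_product, Finset.mem_powersetCard, hresdef] at hp
      exact right_inv_lemma a b hij s T B hp.1.1 ((Finset.mem_filter.mp hp.2).2)
  · rw [Finset.card_eq_zero, Finset.filter_eq_empty_iff]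
    rintro A - ⟨hA, hSF⟩
    obtain ⟨h1, h2⟩ := key_facts a b i j s A hA hSF
    exact hcond ⟨h1, by omega⟩

lemma full_card_eq {N : ℕ} (a b : Fin N → ℕ) :
    numGraphsZ (fun n => (a n : ℤ)) (fun n => (b n : ℤ))
    = (Finset.univ.filter (fun A : Fin N → Fin N → Bool =>
        ∀ v, inDeg A v = a v ∧ outDeg A v = b v)).card := by
  rw [numGraphsZ_eq_card]
  congr 1
  apply Finset.filter_congr
  intro A _
  constructor <;> intro hA v <;> obtain ⟨h1, h2⟩ := hA v <;>
    exact ⟨by exact_mod_cast h1, by exact_mod_cast h2⟩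

lemma res_card_eq {N : ℕ} (a b : Fin N → ℕ) (i j : Fin N) (s : Fin N → Fin 3) :
    numGraphsZ (fun n => if n = i ∨ n = j then 0 else (a n : ℤ))
      (fun n => (b n : ℤ) - ((s n : ℕ) : ℤ))
    = (Finset.univ.filter (fun B : Fin N → Fin N → Bool =>
        ∀ v, (inDeg B v = if v = i ∨ v = j then 0 else a v)
          ∧ outDeg B v + (s v : ℕ) = b v)).card := by
  rw [numGraphsZ_eq_card]
  congr 1
  apply Finset.filter_congr
  intro B _
  constructor <;> intro hB v <;> obtain ⟨h1, h2⟩ := hB v <;>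
    refine ⟨?_, by omega⟩ <;> beta_reduce at h1 ⊢ <;> split_ifs at h1 ⊢ <;> omega


/-- Theorem 1 (partitioning): for a bidegree sequence `d = (a,b)` and nodes
`i ≠ j` with `a j ≤ a i`,
`‖G_d‖ = ∑_{k=0}^{a_j} C(a_i + a_j - 2k, a_j - k) ‖G_{X_k}‖`, where `X_k`
consists of the residual sequences `(a - a_i e_i - a_j e_j, b - s)` with
`s : Fin N → {0,1,2}` having exactly `k` entries equal to `2` and
`∑ s = a_i + a_j`. -/
theorem stmt_2 (N : ℕ) (a b : Fin N → ℕ) (i j : Fin N) (hij : i ≠ j)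
    (h : a j ≤ a i) :
    numGraphsZ (fun n => (a n : ℤ)) (fun n => (b n : ℤ)) =
    ∑ k ∈ Finset.range (a j + 1),
      Nat.choose (a i + a j - 2 * k) (a j - k) *
        ∑ s : Fin N → Fin 3,
          (if (Finset.univ.filter (fun n => (s n : ℕ) = 2)).card = k ∧
              (∑ n, (s n : ℕ)) = a i + a j
           then numGraphsZ
                  (fun n => if n = i ∨ n = j then 0 else (a n : ℤ))
                  (fun n => (b n : ℤ) - ((s n : ℕ) : ℤ))
           else 0) := by
  classical
  rw [full_card_eq]
  simp only [res_card_eq a b i j]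
  rw [Finset.card_eq_sum_card_fiberwise (fun A _ => Finset.mem_univ (SF i j A))]
  have lhs_eq : ∀ s : Fin N → Fin 3,
      ((Finset.univ.filter (fun A : Fin N → Fin N → Bool =>
          ∀ v, inDeg A v = a v ∧ outDeg A v = b v)).filter
        (fun A => SF i j A = s)).card
      = if (∑ n, (s n : ℕ)) = a i + a j ∧
            (Finset.univ.filter (fun n => (s n : ℕ) = 2)).card ≤ a j then
          Nat.choose (a i + a j - 2 * (Finset.univ.filter (fun n => (s n : ℕ) = 2)).card)
            (a j - (Finset.univ.filter (fun n => (s n : ℕ) = 2)).card) *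
          (Finset.univ.filter (fun B : Fin N → Fin N → Bool =>
            ∀ v, (inDeg B v = if v = i ∨ v = j then 0 else a v)
              ∧ outDeg B v + (s v : ℕ) = b v)).card
        else 0 := by
    intro s
    rw [Finset.filter_filter]
    exact fiber_card a b i j hij h s
  rw [Finset.sum_congr rfl fun s _ => lhs_eq s]
  symm
  calc
    ∑ k ∈ Finset.range (a j + 1),
        Nat.choose (a i + a j - 2 * k) (a j - k) *
          ∑ s : Fin N → Fin 3,
            (if (Finset.univ.filter (fun n => (s n : ℕ) = 2)).card = k ∧
                (∑ n, (s n : ℕ)) = a i + a j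
             then (Finset.univ.filter (fun B : Fin N → Fin N → Bool =>
                ∀ v, (inDeg B v = if v = i ∨ v = j then 0 else a v)
                  ∧ outDeg B v + (s v : ℕ) = b v)).card
             else 0)
      = ∑ k ∈ Finset.range (a j + 1), ∑ s : Fin N → Fin 3,
          (if (Finset.univ.filter (fun n => (s n : ℕ) = 2)).card = k ∧
              (∑ n, (s n : ℕ)) = a i + a j
           then Nat.choose (a i + a j - 2 * k) (a j - k) *
              (Finset.univ.filter (fun B : Fin N → Fin N → Bool =>
                ∀ v, (inDeg B v = if v = i ∨ v = j then 0 else a v)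
                  ∧ outDeg B v + (s v : ℕ) = b v)).card
           else 0) := by
        simp only [Finset.mul_sum, mul_ite, mul_zero]
    _ = ∑ s : Fin N → Fin 3, ∑ k ∈ Finset.range (a j + 1),
          (if (Finset.univ.filter (fun n => (s n : ℕ) = 2)).card = k ∧
              (∑ n, (s n : ℕ)) = a i + a j
           then Nat.choose (a i + a j - 2 * k) (a j - k) *
              (Finset.univ.filter (fun B : Fin N → Fin N → Bool =>
                ∀ v, (inDeg B v = if v = i ∨ v = j then 0 else a v)
                  ∧ outDeg B v + (s v : ℕ) = b v)).card
           else 0) := Finset.sum_comm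
    _ = ∑ s : Fin N → Fin 3,
          (if (∑ n, (s n : ℕ)) = a i + a j ∧
              (Finset.univ.filter (fun n => (s n : ℕ) = 2)).card ≤ a j then
            Nat.choose (a i + a j - 2 * (Finset.univ.filter (fun n => (s n : ℕ) = 2)).card)
              (a j - (Finset.univ.filter (fun n => (s n : ℕ) = 2)).card) *
            (Finset.univ.filter (fun B : Fin N → Fin N → Bool =>
              ∀ v, (inDeg B v = if v = i ∨ v = j then 0 else a v)
                ∧ outDeg B v + (s v : ℕ) = b v)).card
          else 0) := by
        refine Finset.sum_congr rfl fun s _ => ?_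
        set c2 := (Finset.univ.filter (fun n => (s n : ℕ) = 2)).card with hc2def
        by_cases hs : (∑ n, (s n : ℕ)) = a i + a j ∧ c2 ≤ a j
        · rw [if_pos hs, Finset.sum_eq_single c2]
          · rw [if_pos ⟨rfl, hs.1⟩]
          · intro k _ hne
            rw [if_neg]
            rintro ⟨he, -⟩
            exact hne he.symm
          · intro hnotmem
            exact absurd (Finset.mem_range.mpr (by omega)) hnotmem
        · rw [if_neg hs]
          apply Finset.sum_eq_zero
          intro k hk
          rw [if_neg]
          rintro ⟨he, hsum⟩
          exact hs ⟨hsum, by rw [he]; exact Nat.lt_succ_iff.mp (Finset.mem_range.mp hk)⟩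
end

section
/- Let d = (a,b) be a bidegree sequence with Σ_n a_n = Σ_n b_n + 1, and let i, j be indices with a_i ≥ a_j > 0. Define d_{-i} = (a - e_i, b) and d_{-j} = (a - e_j, b). Then ‖G_{d_{-i}}‖ ≥ (a_i / a_j) · ‖G_{d_{-j}}‖, where ‖G_d‖ is the number of directed graphs (loops allowed) realizing d. -/
open Finset

namespace Stmt3Aux

variable {N : ℕ}

/-- Swap the entries at columns `i` and `j` in row `u`. -/
def swp (A : Fin N → Fin N → Bool) (u i j : Fin N) : Fin N → Fin N → Bool :=
  fun u' v => if u' = u then (if v = i then A u j else if v = j then A u i else A u v)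
    else A u' v

/-- Zero out columns `i` and `j` (projection onto the "rest"). -/
def pr (i j : Fin N) (A : Fin N → Fin N → Bool) : Fin N → Fin N → Bool :=
  fun u v => if v = i ∨ v = j then false else A u v

lemma swp_comm (A : Fin N → Fin N → Bool) (u i j : Fin N) (hij : i ≠ j) :
    swp A u i j = swp A u j i := by
  funext u' v
  unfold swp
  by_cases hu : u' = u
  · by_cases hvi : v = i
    · subst hvi; simp [hu, hij, Ne.symm hij]
    · by_cases hvj : v = j <;> simp [hu, hvi, hvj, hij, Ne.symm hij]
  · simp [hu]

lemma pr_comm (i j : Fin N) (A : Fin N → Fin N → Bool) : pr i j A = pr j i A := by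
  funext u v; unfold pr; by_cases hv : v = i ∨ v = j
  · simp [hv, Or.comm.mp hv]
  · rw [if_neg hv, if_neg (by tauto)]

lemma swp_invol (A : Fin N → Fin N → Bool) (u i j : Fin N) (hij : i ≠ j) :
    swp (swp A u i j) u i j = A := by
  funext u' v
  unfold swp
  by_cases hu : u' = u
  · subst hu
    by_cases hvi : v = i
    · subst hvi; simp [hij, Ne.symm hij]
    · by_cases hvj : v = j
      · subst hvj; simp [hij, Ne.symm hij]
      · simp [hvi, hvj]
  · simp [hu]

lemma card_flip {f g : Fin N → Bool} {i j : Fin N} (hij : i ≠ j)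
    (hfi : f i = true) (hfj : f j = false) (hgi : g i = false) (hgj : g j = true)
    (hoth : ∀ v, v ≠ i → v ≠ j → g v = f v) :
    (univ.filter fun v => g v = true).card = (univ.filter fun v => f v = true).card := by
  have hset : (univ.filter fun v => g v = true)
      = insert j ((univ.filter fun v => f v = true).erase i) := by
    ext v
    simp only [mem_insert, mem_erase, mem_filter, mem_univ, true_and]
    constructor
    · intro hv
      by_cases hvj : v = j
      · exact Or.inl hvj
      · by_cases hvi : v = i
        · subst hvi; rw [hgi] at hv; cases hv
        · exact Or.inr ⟨hvi, (hoth v hvi hvj) ▸ hv⟩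
    · rintro (rfl | ⟨hvi, hv⟩)
      · exact hgj
      · by_cases hvj : v = j
        · subst hvj; rw [hfj] at hv; cases hv
        · rw [hoth v hvi hvj]; exact hv
  have hjmem : j ∉ (univ.filter fun v => f v = true).erase i := by
    simp [hfj]
  have himem : i ∈ (univ.filter fun v => f v = true) := by simp [hfi]
  rw [hset, card_insert_of_notMem hjmem, card_erase_of_mem himem]
  exact Nat.sub_add_cancel (card_pos.mpr ⟨i, himem⟩)

lemma card_flip_down {f g : Fin N → Bool} {u : Fin N}
    (hfu : f u = true) (hgu : g u = false) (hoth : ∀ v, v ≠ u → g v = f v) :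
    (univ.filter fun v => g v = true).card + 1 = (univ.filter fun v => f v = true).card := by
  have humem : u ∈ (univ.filter fun v => f v = true) := by simp [hfu]
  have hset : (univ.filter fun v => g v = true)
      = (univ.filter fun v => f v = true).erase u := by
    ext v
    simp only [mem_erase, mem_filter, mem_univ, true_and]
    constructor
    · intro hv
      by_cases hvu : v = u
      · subst hvu; rw [hgu] at hv; cases hv
      · exact ⟨hvu, (hoth v hvu) ▸ hv⟩
    · rintro ⟨hvu, hv⟩; rw [hoth v hvu]; exact hv
  rw [hset, card_erase_of_mem humem]
  exact Nat.sub_add_cancel (card_pos.mpr ⟨u, humem⟩)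

lemma pair_filter_card (f : Fin N → Bool) {i j : Fin N} (hij : i ≠ j) :
    (({i, j} : Finset (Fin N)).filter fun v => f v = true).card
      = (if f i = true then 1 else 0) + (if f j = true then 1 else 0) := by
  rw [show ({i, j} : Finset (Fin N)) = insert i {j} from rfl, filter_insert, filter_singleton]
  cases hfi : f i <;> cases hfj : f j <;>
    simp [hij, card_insert_of_notMem, mem_filter]

lemma card_split (f : Fin N → Bool) (i j : Fin N) :
    (univ.filter fun v => f v = true).card
      = (univ.filter fun v => f v = true ∧ v ≠ i ∧ v ≠ j).card
        + (({i, j} : Finset (Fin N)).filter fun v => f v = true).card := by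
  rw [← card_union_of_disjoint ?_]
  · congr 1
    ext v
    simp only [mem_union, mem_filter, mem_univ, true_and, mem_insert, mem_singleton]
    by_cases hvi : v = i
    · tauto
    · by_cases hvj : v = j <;> tauto
  · rw [disjoint_left]
    intro v hv hv2
    simp only [mem_filter, mem_univ, true_and] at hv
    simp only [mem_filter, mem_insert, mem_singleton] at hv2
    tauto

lemma row_pair_iff (f g : Fin N → Bool) {i j : Fin N} (hij : i ≠ j)
    (hcard : (univ.filter fun v => f v = true).card = (univ.filter fun v => g v = true).card)
    (hoth : ∀ v, v ≠ i → v ≠ j → f v = g v) :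
    (f i = true ∧ f j = true) ↔ (g i = true ∧ g j = true) := by
  have hoff : (univ.filter fun v => f v = true ∧ v ≠ i ∧ v ≠ j)
      = (univ.filter fun v => g v = true ∧ v ≠ i ∧ v ≠ j) := by
    ext v
    simp only [mem_filter, mem_univ, true_and]
    constructor
    · rintro ⟨h1, h2, h3⟩; exact ⟨(hoth v h2 h3) ▸ h1, h2, h3⟩
    · rintro ⟨h1, h2, h3⟩; exact ⟨(hoth v h2 h3).symm ▸ h1, h2, h3⟩
  rw [card_split f i j, card_split g i j, pair_filter_card f hij, pair_filter_card g hij,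
    hoff] at hcard
  cases hfi : f i <;> cases hfj : f j <;> cases hgi : g i <;> cases hgj : g j <;>
    simp [hfi, hfj, hgi, hgj] at hcard ⊢ <;> omega

lemma swp_mem_gen {a' b : Fin N → ℕ} {i j : Fin N} (hij : i ≠ j)
    {A : Fin N → Fin N → Bool} {u : Fin N}
    (hA : ∀ v, inDeg A v = a' v ∧ outDeg A v = b v)
    (hui : A u i = true) (huj : A u j = false) :
    (∀ v, inDeg (swp A u i j) v
        = (if v = i then a' i - 1 else if v = j then a' j + 1 else a' v)
      ∧ outDeg (swp A u i j) v = b v)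
    ∧ pr i j (swp A u i j) = pr i j A
    ∧ swp A u i j u j = true ∧ swp A u i j u i = false := by
  have hswpu : ∀ v, swp A u i j u v = if v = i then A u j else if v = j then A u i else A u v := by
    intro v; simp [swp]
  have hswpo : ∀ u' v, u' ≠ u → swp A u i j u' v = A u' v := by
    intro u' v hu; simp [swp, hu]
  refine ⟨?_, ?_, ?_, ?_⟩
  · intro v
    constructor
    · -- in-degrees
      by_cases hvi : v = i
      · subst hvi
        rw [if_pos rfl]
        have hcol : (univ.filter fun u' => swp A u v j u' v = true).card + 1
            = (univ.filter fun u' => A u' v = true).card := by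
          apply card_flip_down (f := fun u' => A u' v) (g := fun u' => swp A u v j u' v)
            (u := u) hui
          · rw [hswpu v, if_pos rfl]; exact huj
          · intro w hw; exact hswpo w v hw
        have := (hA v).1
        rw [inDeg] at this ⊢
        omega
      · by_cases hvj : v = j
        · subst hvj
          rw [if_neg hvi, if_pos rfl]
          have hcol : (univ.filter fun u' => A u' v = true).card + 1
              = (univ.filter fun u' => swp A u i v u' v = true).card := by
            apply card_flip_down (f := fun u' => swp A u i v u' v) (g := fun u' => A u' v)
              (u := u) ?_ huj
            · intro w hw; exact (hswpo w v hw).symm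
            · show swp A u i v u v = true
              rw [hswpu v, if_neg (Ne.symm hij), if_pos rfl]; exact hui
          have := (hA v).1
          rw [inDeg] at this ⊢
          omega
        · rw [if_neg hvi, if_neg hvj, ← (hA v).1, inDeg, inDeg]
          congr 1
          ext w
          simp only [mem_filter, mem_univ, true_and]
          by_cases hw : w = u
          · subst hw; rw [hswpu v, if_neg hvi, if_neg hvj]
          · rw [hswpo w v hw]
    · -- out-degrees
      by_cases hv : v = u
      · subst hv
        rw [← (hA v).2, outDeg, outDeg]
        exact card_flip hij hui huj (by rw [hswpu i, if_pos rfl]; exact huj)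
          (by rw [hswpu j, if_neg (Ne.symm hij), if_pos rfl]; exact hui)
          (fun w hwi hwj => by rw [hswpu w, if_neg hwi, if_neg hwj])
      · rw [← (hA v).2, outDeg, outDeg]
        congr 1
        ext w
        simp only [mem_filter, mem_univ, true_and]
        rw [hswpo v w hv]
  · funext u' v
    unfold pr
    by_cases hv : v = i ∨ v = j
    · simp [hv]
    · rw [if_neg hv, if_neg hv]
      push_neg at hv
      by_cases hu' : u' = u
      · subst hu'; rw [hswpu v, if_neg hv.1, if_neg hv.2]
      · exact hswpo u' v hu'
  · rw [hswpu j, if_neg (Ne.symm hij), if_pos rfl]; exact hui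
  · rw [hswpu i, if_pos rfl]; exact huj

lemma c_const {b : Fin N → ℕ} {i j : Fin N} (hij : i ≠ j) (A B : Fin N → Fin N → Bool)
    (hA : ∀ v, outDeg A v = b v) (hB : ∀ v, outDeg B v = b v)
    (hpr : pr i j A = pr i j B) :
    (univ.filter fun u => A u i = true ∧ A u j = true)
      = (univ.filter fun u => B u i = true ∧ B u j = true) := by
  ext u
  simp only [mem_filter, mem_univ, true_and]
  apply row_pair_iff (A u) (B u) hij
  · exact ((hA u).trans (hB u).symm)
  · intro v hv1 hv2
    have := congrFun (congrFun hpr u) v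
    unfold pr at this
    rwa [if_neg (by tauto), if_neg (by tauto)] at this

lemma count_split (A : Fin N → Fin N → Bool) (i j : Fin N) :
    (univ.filter fun u => A u i = true ∧ A u j = true).card
      + (univ.filter fun u => A u i = true ∧ A u j = false).card
      = inDeg A i := by
  have := card_filter_add_card_filter_not
    (s := univ.filter fun u => A u i = true) (p := fun u => A u j = true)
  rw [filter_filter, filter_filter] at this
  simp only [Bool.not_eq_true] at this
  exact this

lemma fiber_le (a b : Fin N → ℕ) (i j : Fin N) (hij : i ≠ j) (hj : 0 < a j)
    (h : a j ≤ a i) (r : Fin N → Fin N → Bool) :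
    a i * ((univ.filter fun A : Fin N → Fin N → Bool =>
        (∀ v, inDeg A v = (if v = j then a j - 1 else a v) ∧ outDeg A v = b v)
        ∧ pr i j A = r)).card
    ≤ a j * ((univ.filter fun A : Fin N → Fin N → Bool =>
        (∀ v, inDeg A v = (if v = i then a i - 1 else a v) ∧ outDeg A v = b v)
        ∧ pr i j A = r)).card := by
  set Xr := (univ.filter fun A : Fin N → Fin N → Bool =>
      (∀ v, inDeg A v = (if v = j then a j - 1 else a v) ∧ outDeg A v = b v)
      ∧ pr i j A = r) with hXr
  set Yr := (univ.filter fun A : Fin N → Fin N → Bool =>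
      (∀ v, inDeg A v = (if v = i then a i - 1 else a v) ∧ outDeg A v = b v)
      ∧ pr i j A = r) with hYr
  have hXmem : ∀ A, A ∈ Xr ↔
      ((∀ v, inDeg A v = (if v = j then a j - 1 else a v) ∧ outDeg A v = b v)
        ∧ pr i j A = r) := by
    intro A; rw [hXr, mem_filter]; simp
  have hYmem : ∀ A, A ∈ Yr ↔
      ((∀ v, inDeg A v = (if v = i then a i - 1 else a v) ∧ outDeg A v = b v)
        ∧ pr i j A = r) := by
    intro A; rw [hYr, mem_filter]; simp
  rcases Xr.eq_empty_or_nonempty with hXe | ⟨A₀, hA₀⟩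
  · rw [hXe]; simp
  · have hA₀' := (hXmem A₀).mp hA₀
    set p := (univ.filter fun u => A₀ u i = true ∧ A₀ u j = true).card with hp
    -- common-neighbour count is p throughout the fiber
    have hcX : ∀ A ∈ Xr, (univ.filter fun u => A u i = true ∧ A u j = true).card = p := by
      intro A hA
      have hA' := (hXmem A).mp hA
      rw [c_const hij A A₀ (fun v => (hA'.1 v).2) (fun v => (hA₀'.1 v).2)
        (hA'.2.trans hA₀'.2.symm)]
    have hcY : ∀ B ∈ Yr, (univ.filter fun u => B u i = true ∧ B u j = true).card = p := by
      intro B hB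
      have hB' := (hYmem B).mp hB
      rw [c_const hij B A₀ (fun v => (hB'.1 v).2) (fun v => (hA₀'.1 v).2)
        (hB'.2.trans hA₀'.2.symm)]
    -- bound : p < a j
    have hpb : p < a j := by
      have hsub : (univ.filter fun u => A₀ u i = true ∧ A₀ u j = true)
          ⊆ (univ.filter fun u => A₀ u j = true) := by
        intro u hu
        simp only [mem_filter, mem_univ, true_and] at hu ⊢
        exact hu.2
      have hle := card_le_card hsub
      have hdj : inDeg A₀ j = a j - 1 := by
        have := (hA₀'.1 j).1; rwa [if_pos rfl] at this
      rw [← hp] at hle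
      rw [inDeg] at hdj
      omega
    -- counts within each graph
    have hcountX : ∀ A ∈ Xr,
        (univ.filter fun u => A u i = true ∧ A u j = false).card = a i - p := by
      intro A hA
      have h1 := count_split A i j
      have h2 : inDeg A i = a i := by
        have := ((hXmem A).mp hA).1 i
        rw [if_neg hij] at this
        exact this.1
      rw [hcX A hA, h2] at h1
      omega
    have hcountY : ∀ B ∈ Yr,
        (univ.filter fun u => B u j = true ∧ B u i = false).card = a j - p := by
      intro B hB
      have h1 := count_split B j i
      have h2 : inDeg B j = a j := by
        have := ((hYmem B).mp hB).1 j
        rw [if_neg (Ne.symm hij)] at this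
        exact this.1
      have h3 : (univ.filter fun u => B u j = true ∧ B u i = true).card = p := by
        rw [← hcY B hB]
        congr 1
        ext u
        simp only [mem_filter, mem_univ, true_and]
        tauto
      rw [h3, h2] at h1
      omega
    -- the swap bijection between marked pairs
    have hbij : (Xr.sigma fun A => univ.filter fun u => A u i = true ∧ A u j = false).card
        = (Yr.sigma fun B => univ.filter fun u => B u j = true ∧ B u i = false).card := by
      apply card_nbij' (i := fun x => ⟨swp x.1 x.2 i j, x.2⟩)
        (j := fun x => ⟨swp x.1 x.2 i j, x.2⟩)
      · rintro ⟨A, u⟩ hx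
        rw [mem_coe, mem_sigma] at hx ⊢
        obtain ⟨hA, hu⟩ := hx
        simp only [mem_filter, mem_univ, true_and] at hu
        have hA' := (hXmem A).mp hA
        have gen := swp_mem_gen hij hA'.1 hu.1 hu.2
        constructor
        · rw [hYmem]
          refine ⟨fun v => ⟨?_, (gen.1 v).2⟩, gen.2.1.trans hA'.2⟩
          rw [(gen.1 v).1]
          by_cases hvi : v = i
          · subst hvi; rw [if_pos rfl, if_pos rfl, if_neg hij]
          · by_cases hvj : v = j
            · subst hvj
              rw [if_neg hvi, if_pos rfl, if_neg hvi, if_pos rfl]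
              omega
            · rw [if_neg hvi, if_neg hvj, if_neg hvi, if_neg hvj]
        · simp only [mem_filter, mem_univ, true_and]
          exact ⟨gen.2.2.1, gen.2.2.2⟩
      · rintro ⟨B, u⟩ hx
        rw [mem_coe, mem_sigma] at hx ⊢
        obtain ⟨hB, hu⟩ := hx
        simp only [mem_filter, mem_univ, true_and] at hu
        have hB' := (hYmem B).mp hB
        have gen := swp_mem_gen (Ne.symm hij) hB'.1 hu.1 hu.2
        rw [← swp_comm B u i j hij] at gen
        constructor
        · rw [hXmem]
          refine ⟨fun v => ⟨?_, (gen.1 v).2⟩, ?_⟩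
          · rw [(gen.1 v).1]
            by_cases hvj : v = j
            · subst hvj; rw [if_pos rfl, if_pos rfl, if_neg (Ne.symm hij)]
            · by_cases hvi : v = i
              · subst hvi
                rw [if_neg hvj, if_pos rfl, if_neg hvj, if_pos rfl]
                omega
              · rw [if_neg hvj, if_neg hvi, if_neg hvj, if_neg hvi]
          · rw [pr_comm i j, gen.2.1, ← pr_comm i j]
            exact hB'.2
        · simp only [mem_filter, mem_univ, true_and]
          exact ⟨gen.2.2.1, gen.2.2.2⟩
      · rintro ⟨A, u⟩ hx
        simp only
        rw [swp_invol A u i j hij]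
      · rintro ⟨B, u⟩ hx
        simp only
        rw [swp_invol B u i j hij]
    rw [card_sigma, card_sigma] at hbij
    rw [Finset.sum_congr rfl hcountX, Finset.sum_congr rfl hcountY, sum_const, sum_const,
      smul_eq_mul, smul_eq_mul] at hbij
    -- final arithmetic
    have hmul : a i * (a j - p) ≤ a j * (a i - p) := by
      obtain ⟨t, ht⟩ : ∃ t, a j = p + t + 1 := ⟨a j - p - 1, by omega⟩
      obtain ⟨s, hs⟩ : ∃ s, a i = p + t + 1 + s := ⟨a i - a j, by omega⟩
      rw [hs, ht, show p + t + 1 + s - p = t + 1 + s by omega,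
        show p + t + 1 - p = t + 1 by omega]
      nlinarith
    have hpos : 0 < a j - p := by omega
    apply Nat.le_of_mul_le_mul_right _ hpos
    calc a i * Xr.card * (a j - p) = Xr.card * (a i * (a j - p)) := by ring
      _ ≤ Xr.card * (a j * (a i - p)) := Nat.mul_le_mul (le_refl _) hmul
      _ = a j * (Xr.card * (a i - p)) := by ring
      _ = a j * (Yr.card * (a j - p)) := by rw [hbij]
      _ = a j * Yr.card * (a j - p) := by ring

end Stmt3Aux

open Finset Stmt3Aux in
/-- Corollary 1: if `∑ a = ∑ b + 1` and `a_i ≥ a_j > 0`, then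
`‖G_{d_{-i}}‖ ≥ (a_i / a_j) ‖G_{d_{-j}}‖`, i.e.
`a_j · ‖G_{(a - e_i, b)}‖ ≥ a_i · ‖G_{(a - e_j, b)}‖`. -/
theorem stmt_3 (N : ℕ) (a b : Fin N → ℕ) (i j : Fin N) (hij : i ≠ j)
    (hsum : ∑ n, a n = (∑ n, b n) + 1)
    (hj : 0 < a j) (h : a j ≤ a i) :
    a i * numGraphs (fun n => if n = j then a j - 1 else a n) b ≤
      a j * numGraphs (fun n => if n = i then a i - 1 else a n) b := by
  rw [numGraphs, numGraphs, Nat.card_eq_fintype_card, Nat.card_eq_fintype_card,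
    Fintype.card_subtype, Fintype.card_subtype]
  rw [card_eq_sum_card_fiberwise (f := pr i j) (t := univ) (fun A _ => mem_univ _),
    card_eq_sum_card_fiberwise (f := pr i j) (t := univ) (fun A _ => mem_univ _)]
  rw [mul_sum, mul_sum]
  apply sum_le_sum
  intro r _
  have hle := fiber_le a b i j hij hj h r
  rw [filter_filter, filter_filter]
  exact hle
end

section
/- Consider a degree sequence a = (a_1, a_2, 2, ..., 2, 1, ..., 1, 0, ..., 0) ∈ ℤ^N for an undirected loopless simple graph, where 2 appears q_2 times, 1 appears q_1 times, and q_1 + 2q_2 = a_1 + a_2, with a_1, a_2 ≥ q_2. Then the number of undirected loopless simple graphs realizing a in which nodes 1 and 2 are not adjacent equals C(a_1 + a_2 - 2q_2, a_1 - q_2). -/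
def udeg {N : ℕ} (A : Fin N → Fin N → Bool) (v : Fin N) : ℕ :=
  (Finset.univ.filter (fun u => A v u = true)).card

namespace Stmt8

def istwo (q2 : ℕ) {N : ℕ} (v : Fin (N+2)) : Prop := 2 ≤ (v:ℕ) ∧ (v:ℕ) < 2 + q2
def isone (q2 q1 : ℕ) {N : ℕ} (v : Fin (N+2)) : Prop :=
  2 + q2 ≤ (v:ℕ) ∧ (v:ℕ) < 2 + q2 + q1

instance {q2 N : ℕ} : DecidablePred (istwo q2 (N := N)) := fun _ => by
  unfold istwo; infer_instance
instance {q2 q1 N : ℕ} : DecidablePred (isone q2 q1 (N := N)) := fun _ => by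
  unfold isone; infer_instance


def P (q2 q1 : ℕ) {N : ℕ} (S : Finset (Fin (N+2))) (u v : Fin (N+2)) : Prop :=
  ((u:ℕ) = 0 ∧ (istwo q2 v ∨ v ∈ S)) ∨ ((v:ℕ) = 0 ∧ (istwo q2 u ∨ u ∈ S)) ∨
  ((u:ℕ) = 1 ∧ (istwo q2 v ∨ (isone q2 q1 v ∧ v ∉ S))) ∨
  ((v:ℕ) = 1 ∧ (istwo q2 u ∨ (isone q2 q1 u ∧ u ∉ S)))

instance {q2 q1 N : ℕ} (S : Finset (Fin (N+2))) (u v : Fin (N+2)) :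
    Decidable (P q2 q1 S u v) := by unfold P; infer_instance

def matB (q2 q1 : ℕ) {N : ℕ} (S : Finset (Fin (N+2))) : Fin (N+2) → Fin (N+2) → Bool :=
  fun u v => decide (P q2 q1 S u v)

lemma matB_eq_true {q2 q1 N : ℕ} (S : Finset (Fin (N+2))) (u v : Fin (N+2)) :
    matB q2 q1 S u v = true ↔ P q2 q1 S u v := by
  simp [matB]

section main
variable {N a1 a2 q1 q2 : ℕ}

lemma card_val_filter {n : ℕ} (a b : ℕ) (hb : b ≤ n) :
    (Finset.univ.filter (fun v : Fin n => a ≤ (v:ℕ) ∧ (v:ℕ) < b)).card = b - a := by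
  have h : (Finset.univ.filter (fun v : Fin n => a ≤ (v:ℕ) ∧ (v:ℕ) < b)) =
      (Finset.Ico a b).attachFin (fun m hm => lt_of_lt_of_le (Finset.mem_Ico.mp hm).2 hb) := by
    ext v
    simp [Finset.mem_attachFin, Finset.mem_Ico]
  rw [h, Finset.card_attachFin, Nat.card_Ico]

lemma card_twosF (hN : q2 + q1 ≤ N) :
    (Finset.univ.filter (fun v : Fin (N+2) => istwo q2 v)).card = q2 := by
  have := card_val_filter (n := N+2) 2 (2+q2) (by omega)
  simpa [istwo] using this

lemma card_onesF (hN : q2 + q1 ≤ N) :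
    (Finset.univ.filter (fun v : Fin (N+2) => isone q2 q1 v)).card = q1 := by
  have := card_val_filter (n := N+2) (2+q2) (2+q2+q1) (by omega)
  simpa [isone] using this

-- test of the characterization lemma for "good" adjacency matrices
lemma char_good
    (hsum : q1 + 2*q2 = a1 + a2) (h1 : q2 ≤ a1) (h2 : q2 ≤ a2) (hN : q2 + q1 ≤ N)
    (A : Fin (N+2) → Fin (N+2) → Bool)
    (hsym : ∀ u v, A u v = A v u) (hloop : ∀ v, A v v = false)
    (hdeg : ∀ v, udeg A v =
      (if (v : ℕ) = 0 then a1 else if (v : ℕ) = 1 then a2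
       else if (v : ℕ) < 2 + q2 then 2
       else if (v : ℕ) < 2 + q2 + q1 then 1 else 0))
    (h01 : A 0 1 = false) :
    (∀ w : Fin (N+2), A 0 w = true ↔ istwo q2 w ∨
        w ∈ Finset.univ.filter (fun v : Fin (N+2) => isone q2 q1 v ∧ A 0 v = true)) ∧
    (∀ w : Fin (N+2), A 1 w = true ↔ istwo q2 w ∨ (isone q2 q1 w ∧
        w ∉ Finset.univ.filter (fun v : Fin (N+2) => isone q2 q1 v ∧ A 0 v = true))) ∧
    (Finset.univ.filter (fun v : Fin (N+2) => isone q2 q1 v ∧ A 0 v = true)).card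
      = a1 - q2 ∧
    A = matB q2 q1
      (Finset.univ.filter (fun v : Fin (N+2) => isone q2 q1 v ∧ A 0 v = true)) := by
  have hval0 : ((0 : Fin (N+2)) : ℕ) = 0 := rfl
  have hval1 : ((1 : Fin (N+2)) : ℕ) = 1 := rfl
  have hne01 : (0 : Fin (N+2)) ≠ 1 := by
    simp [Fin.ext_iff, hval0, hval1]
  -- specialized degrees
  have hdeg0 : udeg A 0 = a1 := by have := hdeg 0; simpa [hval0] using this
  have hdeg1 : udeg A 1 = a2 := by have := hdeg 1; simpa [hval1] using this
  have hdeg2 : ∀ v : Fin (N+2), 2 ≤ (v:ℕ) → (v:ℕ) < 2+q2 → udeg A v = 2 := by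
    intro v h h'; have hd := hdeg v; split_ifs at hd <;> omega
  have hdegone : ∀ v : Fin (N+2), 2+q2 ≤ (v:ℕ) → (v:ℕ) < 2+q2+q1 → udeg A v = 1 := by
    intro v h h'; have hd := hdeg v; split_ifs at hd <;> omega
  have hdegz : ∀ v : Fin (N+2), 2+q2+q1 ≤ (v:ℕ) → udeg A v = 0 := by
    intro v h; have hd := hdeg v; split_ifs at hd <;> omega
  -- zero-degree nodes are isolated
  have hzero : ∀ v : Fin (N+2), 2+q2+q1 ≤ (v:ℕ) → ∀ u, A v u = false := by
    intro v hv u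
    have hd := hdegz v hv
    unfold udeg at hd
    rw [Finset.card_eq_zero] at hd
    have := Finset.eq_empty_iff_forall_notMem.mp hd u
    simpa using this
  -- neighbors of 0 and 1 are small nodes
  have hn0 : ∀ u, A 0 u = true → 2 ≤ (u:ℕ) ∧ (u:ℕ) < 2+q2+q1 := by
    intro u hu
    constructor
    · by_contra hc
      push_neg at hc
      interval_cases h : (u:ℕ)
      · have : u = 0 := by ext; simp [hval0, h]
        rw [this, hloop 0] at hu; exact absurd hu (by simp)
      · have : u = 1 := by ext; simp [hval1, h]
        rw [this, h01] at hu; exact absurd hu (by simp)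
    · by_contra hc
      push_neg at hc
      have := hzero u hc 0
      rw [hsym 0 u, this] at hu
      exact absurd hu (by simp)
  have hn1 : ∀ u, A 1 u = true → 2 ≤ (u:ℕ) ∧ (u:ℕ) < 2+q2+q1 := by
    intro u hu
    constructor
    · by_contra hc
      push_neg at hc
      interval_cases h : (u:ℕ)
      · have : u = 0 := by ext; simp [hval0, h]
        rw [this, hsym 1 0, h01] at hu; exact absurd hu (by simp)
      · have : u = 1 := by ext; simp [hval1, h]
        rw [this, hloop 1] at hu; exact absurd hu (by simp)
    · by_contra hc
      push_neg at hc
      have := hzero u hc 1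
      rw [hsym 1 u, this] at hu
      exact absurd hu (by simp)
  -- the counting argument
  set T : Finset (Fin (N+2)) :=
    Finset.univ.filter (fun v => 2 ≤ (v:ℕ) ∧ (v:ℕ) < 2+q2+q1) with hTdef
  have hTsum : ∑ v ∈ T, udeg A v = 2*q2 + q1 := by
    have hTsplit : T = (Finset.univ.filter (fun v : Fin (N+2) => istwo q2 v)) ∪
        (Finset.univ.filter (fun v : Fin (N+2) => isone q2 q1 v)) := by
      ext v; simp only [hTdef, Finset.mem_filter, Finset.mem_union, Finset.mem_univ, true_and]; simp only [istwo, isone]; omega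
    have hdisj : Disjoint (Finset.univ.filter (fun v : Fin (N+2) => istwo q2 v))
        (Finset.univ.filter (fun v : Fin (N+2) => isone q2 q1 v)) := by
      rw [Finset.disjoint_left]
      intro x hx hx'
      simp only [Finset.mem_filter, Finset.mem_univ, true_and] at hx hx'; simp only [istwo, isone] at hx hx'
      omega
    rw [hTsplit, Finset.sum_union hdisj]
    have e1 : ∑ v ∈ (Finset.univ.filter (fun v : Fin (N+2) => istwo q2 v)), udeg A v
        = ∑ _v ∈ (Finset.univ.filter (fun v : Fin (N+2) => istwo q2 v)), 2 :=
      Finset.sum_congr rfl (fun v hv => by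
        simp only [Finset.mem_filter] at hv; simp only [istwo] at hv
        exact hdeg2 v hv.2.1 hv.2.2)
    have e2 : ∑ v ∈ (Finset.univ.filter (fun v : Fin (N+2) => isone q2 q1 v)), udeg A v
        = ∑ _v ∈ (Finset.univ.filter (fun v : Fin (N+2) => isone q2 q1 v)), 1 :=
      Finset.sum_congr rfl (fun v hv => by
        simp only [Finset.mem_filter] at hv; simp only [isone] at hv
        exact hdegone v hv.2.1 hv.2.2)
    rw [e1, e2, Finset.sum_const, Finset.sum_const, card_twosF hN, card_onesF hN,
      smul_eq_mul, smul_eq_mul]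
    omega
  have hT01sum : ∑ v ∈ T, ((if A v 0 = true then 1 else 0)
      + (if A v 1 = true then 1 else 0)) = a1 + a2 := by
    rw [Finset.sum_add_distrib]
    have e0 : ∑ v ∈ T, (if A v 0 = true then 1 else 0) = a1 := by
      rw [← Finset.card_filter]
      have : T.filter (fun v => A v 0 = true)
          = Finset.univ.filter (fun u => A 0 u = true) := by
        ext x
        simp only [Finset.mem_filter, Finset.mem_univ, true_and, hTdef]
        constructor
        · rintro ⟨_, hx⟩; rw [hsym 0 x]; exact hx
        · intro hx
          refine ⟨hn0 x hx, ?_⟩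
          rw [hsym x 0]; exact hx
      rw [this]
      exact hdeg0
    have e1 : ∑ v ∈ T, (if A v 1 = true then 1 else 0) = a2 := by
      rw [← Finset.card_filter]
      have : T.filter (fun v => A v 1 = true)
          = Finset.univ.filter (fun u => A 1 u = true) := by
        ext x
        simp only [Finset.mem_filter, Finset.mem_univ, true_and, hTdef]
        constructor
        · rintro ⟨_, hx⟩; rw [hsym 1 x]; exact hx
        · intro hx
          refine ⟨hn1 x hx, ?_⟩
          rw [hsym x 1]; exact hx
      rw [this]
      exact hdeg1
    rw [e0, e1]
  have hb : ∀ v ∈ T, (if A v 0 = true then 1 else 0)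
      + (if A v 1 = true then 1 else 0) ≤ udeg A v := by
    intro v _
    unfold udeg
    cases hA0 : A v 0 <;> cases hA1 : A v 1 <;> simp [hA0, hA1]
    · exact ⟨1, by simp [hA1]⟩
    · exact ⟨0, by simp [hA0]⟩
    · calc 2 = ({0, 1} : Finset (Fin (N+2))).card := (Finset.card_pair hne01).symm
        _ ≤ _ := Finset.card_le_card (by
            intro x hx
            simp only [Finset.mem_insert, Finset.mem_singleton] at hx
            rcases hx with rfl | rfl <;> simp [hA0, hA1])
  have hptw : ∀ v ∈ T, (if A v 0 = true then 1 else 0)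
      + (if A v 1 = true then 1 else 0) = udeg A v := by
    by_contra hc
    push_neg at hc
    obtain ⟨v, hvT, hne⟩ := hc
    have hlt := lt_of_le_of_ne (hb v hvT) hne
    have := Finset.sum_lt_sum hb ⟨v, hvT, hlt⟩
    rw [hT01sum, hTsum] at this
    omega
  -- neighbors of small nodes lie in {0,1}
  have hsub : ∀ v ∈ T, (Finset.univ.filter (fun u => A v u = true))
      ⊆ ({0, 1} : Finset (Fin (N+2))) := by
    intro v hvT
    have hcard := hptw v hvT
    set s := Finset.univ.filter (fun u => A v u = true) with hsdef
    have hts : (({0,1} : Finset (Fin (N+2))).filter (· ∈ s)) ⊆ s :=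
      fun x hx => (Finset.mem_filter.mp hx).2
    have hmem0 : ((0 : Fin (N+2)) ∈ s) = (A v 0 = true) := by simp [hsdef]
    have hmem1 : ((1 : Fin (N+2)) ∈ s) = (A v 1 = true) := by simp [hsdef]
    have hcard2 : (({0,1} : Finset (Fin (N+2))).filter (· ∈ s)).card
        = (if A v 0 = true then 1 else 0) + (if A v 1 = true then 1 else 0) := by
      cases hA0 : A v 0 <;> cases hA1 : A v 1 <;>
        simp [Finset.filter_insert, Finset.filter_singleton, hmem0, hmem1, hA0, hA1,
          hne01]
    have hse : s = ({0,1} : Finset (Fin (N+2))).filter (· ∈ s) := by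
      refine (Finset.eq_of_subset_of_card_le hts ?_).symm
      rw [hcard2, hcard]
      exact le_refl _
    rw [hse]
    exact Finset.filter_subset _ _
  -- degree-2 nodes are adjacent to both 0 and 1
  have htwo01 : ∀ v : Fin (N+2), istwo q2 v → A v 0 = true ∧ A v 1 = true := by
    intro v hv
    have hvT : v ∈ T := by simp [hTdef]; exact ⟨hv.1, by have := hv.2; omega⟩
    have hcs : (Finset.univ.filter (fun u => A v u = true)).card = 2 :=
      hdeg2 v hv.1 hv.2
    have heqs : Finset.univ.filter (fun u => A v u = true)
        = ({0,1} : Finset (Fin (N+2))) := by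
      apply Finset.eq_of_subset_of_card_le (hsub v hvT)
      rw [hcs, Finset.card_pair hne01]
    constructor
    · have : (0 : Fin (N+2)) ∈ Finset.univ.filter (fun u => A v u = true) := by
        rw [heqs]; simp
      simpa using this
    · have : (1 : Fin (N+2)) ∈ Finset.univ.filter (fun u => A v u = true) := by
        rw [heqs]; simp
      simpa using this
  -- degree-1 nodes adjacent to exactly one of 0, 1
  have hone01 : ∀ v : Fin (N+2), isone q2 q1 v → (A v 0 = true ↔ ¬ A v 1 = true) := by
    intro v hv
    have hvT : v ∈ T := by simp [hTdef]; exact ⟨by have := hv.1; omega, hv.2⟩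
    have h := hptw v hvT
    rw [hdegone v hv.1 hv.2] at h
    cases hA0 : A v 0 <;> cases hA1 : A v 1 <;> simp [hA0, hA1] at h ⊢
  -- the characterizations
  set SA : Finset (Fin (N+2)) :=
    Finset.univ.filter (fun v : Fin (N+2) => isone q2 q1 v ∧ A 0 v = true) with hSAdef
  have hchar0 : ∀ w : Fin (N+2), A 0 w = true ↔ istwo q2 w ∨ w ∈ SA := by
    intro w
    constructor
    · intro hw
      have hT := hn0 w hw
      by_cases hlt : (w:ℕ) < 2+q2
      · exact Or.inl ⟨hT.1, hlt⟩
      · exact Or.inr (by simp [hSAdef]; exact ⟨⟨by omega, hT.2⟩, hw⟩)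
    · rintro (ht | hs)
      · rw [hsym 0 w]; exact (htwo01 w ht).1
      · simp [hSAdef] at hs; exact hs.2
  have hchar1 : ∀ w : Fin (N+2), A 1 w = true ↔
      istwo q2 w ∨ (isone q2 q1 w ∧ w ∉ SA) := by
    intro w
    constructor
    · intro hw
      have hT := hn1 w hw
      by_cases hlt : (w:ℕ) < 2+q2
      · exact Or.inl ⟨hT.1, hlt⟩
      · refine Or.inr ⟨⟨by omega, hT.2⟩, ?_⟩
        intro hmem
        simp [hSAdef] at hmem
        have hw0 : A w 0 = true := by rw [hsym w 0]; exact hmem.2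
        have hw1 : A w 1 = true := by rw [hsym w 1]; exact hw
        exact absurd hw1 ((hone01 w hmem.1).mp hw0)
    · rintro (ht | ⟨ho, hns⟩)
      · rw [hsym 1 w]; exact (htwo01 w ht).2
      · have hnw0 : ¬ A w 0 = true := by
          intro hw0
          exact hns (by simp [hSAdef]; exact ⟨ho, by rw [hsym 0 w]; exact hw0⟩)
        have hw1 : A w 1 = true := by
          by_contra hc
          exact hnw0 ((hone01 w ho).mpr hc)
        rw [hsym 1 w]; exact hw1
  refine ⟨hchar0, hchar1, ?_, ?_⟩
  -- cardinality of SA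
  have hNA0 : Finset.univ.filter (fun u => A 0 u = true)
      = (Finset.univ.filter (fun v : Fin (N+2) => istwo q2 v)) ∪ SA := by
    ext u
    simp only [Finset.mem_filter, Finset.mem_union, Finset.mem_univ, true_and]
    rw [hchar0 u]
  have hdisj : Disjoint (Finset.univ.filter (fun v : Fin (N+2) => istwo q2 v)) SA := by
    rw [Finset.disjoint_left]
    intro x hx hx'
    simp only [hSAdef, Finset.mem_filter, Finset.mem_univ, true_and] at hx hx'; simp only [istwo, isone] at hx hx'
    omega
  have hcards : a1 = q2 + SA.card := by
    have := hdeg0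
    unfold udeg at this
    rw [hNA0, Finset.card_union_of_disjoint hdisj, card_twosF hN] at this
    omega
  · omega
  -- A = matB q2 q1 SA
  · funext u v
    have hiff : (A u v = true) ↔ P q2 q1 SA u v := by
      constructor
      · intro hA
        rcases Nat.lt_or_ge (u:ℕ) 2 with hu2 | hu2
        · have h01' : (u:ℕ) = 0 ∨ (u:ℕ) = 1 := by omega
          rcases h01' with h0 | h0
          · have hu : u = 0 := by ext; simp [h0]
            rw [hu] at hA
            exact Or.inl ⟨h0, (hchar0 v).mp hA⟩
          · have hu : u = 1 := by ext; simp [h0]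
            rw [hu] at hA
            exact Or.inr (Or.inr (Or.inl ⟨h0, (hchar1 v).mp hA⟩))
        · rcases Nat.lt_or_ge (v:ℕ) 2 with hv2 | hv2
          · have h01' : (v:ℕ) = 0 ∨ (v:ℕ) = 1 := by omega
            rcases h01' with h0 | h0
            · have hv : v = 0 := by ext; simp [h0]
              rw [hv, hsym u 0] at hA
              exact Or.inr (Or.inl ⟨h0, (hchar0 u).mp hA⟩)
            · have hv : v = 1 := by ext; simp [h0]
              rw [hv, hsym u 1] at hA
              exact Or.inr (Or.inr (Or.inr ⟨h0, (hchar1 u).mp hA⟩))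
          · exfalso
            rcases Nat.lt_or_ge (v:ℕ) (2+q2+q1) with hvs | hvs
            · have hvT : v ∈ T := by simp [hTdef]; exact ⟨hv2, hvs⟩
              have hmem : u ∈ ({0,1} : Finset (Fin (N+2))) :=
                hsub v hvT (by simp; rw [hsym v u]; exact hA)
              simp only [Finset.mem_insert, Finset.mem_singleton] at hmem
              rcases hmem with h | h <;> rw [h] at hu2
              · rw [hval0] at hu2; omega
              · rw [hval1] at hu2; omega
            · have := hzero v hvs u
              rw [hsym u v, this] at hA
              exact absurd hA (by simp)
      · rintro (⟨h0, hP⟩ | ⟨h0, hP⟩ | ⟨h0, hP⟩ | ⟨h0, hP⟩)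
        · have hu : u = 0 := by ext; simp [h0]
          rw [hu]; exact (hchar0 v).mpr hP
        · have hv : v = 0 := by ext; simp [h0]
          rw [hv, hsym u 0]; exact (hchar0 u).mpr hP
        · have hu : u = 1 := by ext; simp [h0]
          rw [hu]; exact (hchar1 v).mpr hP
        · have hv : v = 1 := by ext; simp [h0]
          rw [hv, hsym u 1]; exact (hchar1 u).mpr hP
    cases hB : matB q2 q1 SA u v
    · cases hA : A u v
      · rfl
      · exact absurd ((matB_eq_true SA u v).mpr (hiff.mp hA)) (by rw [hB]; simp)
    · exact hiff.mpr ((matB_eq_true SA u v).mp hB)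

variable {S : Finset (Fin (N+2))}

lemma udeg_matB (hsum : q1 + 2*q2 = a1 + a2) (h1 : q2 ≤ a1) (h2 : q2 ≤ a2)
    (hN : q2 + q1 ≤ N) (hS : ∀ v ∈ S, isone q2 q1 v) (hScard : S.card = a1 - q2)
    (v : Fin (N+2)) :
    udeg (matB q2 q1 S) v =
      (if (v : ℕ) = 0 then a1 else if (v : ℕ) = 1 then a2
       else if (v : ℕ) < 2 + q2 then 2
       else if (v : ℕ) < 2 + q2 + q1 then 1 else 0) := by
  have hSsub : S ⊆ Finset.univ.filter (fun v : Fin (N+2) => isone q2 q1 v) := by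
    intro x hx; simp [hS x hx]
  unfold udeg
  by_cases hv0 : (v:ℕ) = 0
  · -- neighbors = twos ∪ S
    have hfil : (Finset.univ.filter (fun u => matB q2 q1 S v u = true)) =
        (Finset.univ.filter (fun u : Fin (N+2) => istwo q2 u)) ∪ S := by
      ext u
      simp only [Finset.mem_filter, Finset.mem_union, Finset.mem_univ, true_and,
        matB_eq_true]
      constructor
      · rintro (⟨h, h'⟩ | ⟨h, h'⟩ | ⟨h, h'⟩ | ⟨h, h'⟩)
        · exact h'
        · exact h'.elim (fun ht => absurd ht.1 (by omega))
            (fun hs => absurd (hS _ hs).1 (by omega))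
        · omega
        · rcases h' with ht | ⟨ho, _⟩
          · exact absurd ht.1 (by omega)
          · exact absurd ho.1 (by omega)
      · intro h; exact Or.inl ⟨hv0, h⟩
    rw [hfil, Finset.card_union_of_disjoint, card_twosF hN, hScard]
    · simp [hv0]; omega
    · rw [Finset.disjoint_left]
      intro x hx hxS
      have := hS x hxS
      simp only [Finset.mem_filter] at hx; simp only [istwo] at hx
      simp only [isone] at this; omega
  · by_cases hv1 : (v:ℕ) = 1
    · have hfil : (Finset.univ.filter (fun u => matB q2 q1 S v u = true)) =
          (Finset.univ.filter (fun u : Fin (N+2) => istwo q2 u)) ∪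
          ((Finset.univ.filter (fun u : Fin (N+2) => isone q2 q1 u)) \ S) := by
        ext u
        simp only [Finset.mem_filter, Finset.mem_union, Finset.mem_sdiff,
          Finset.mem_univ, true_and, matB_eq_true]
        constructor
        · rintro (⟨h, h'⟩ | ⟨h, h'⟩ | ⟨h, h'⟩ | ⟨h, h'⟩)
          · omega
          · rcases h' with ht | hs
            · exact absurd ht.1 (by omega)
            · exact absurd (hS _ hs).1 (by omega)
          · rcases h' with ht | ⟨ho, hns⟩
            · exact Or.inl ht
            · exact Or.inr ⟨ho, hns⟩
          · rcases h' with ht | ⟨ho, _⟩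
            · exact absurd ht.1 (by omega)
            · exact absurd ho.1 (by omega)
        · rintro (ht | ⟨ho, hns⟩)
          · exact Or.inr (Or.inr (Or.inl ⟨hv1, Or.inl ht⟩))
          · exact Or.inr (Or.inr (Or.inl ⟨hv1, Or.inr ⟨ho, hns⟩⟩))
      rw [hfil, Finset.card_union_of_disjoint, card_twosF hN,
        Finset.card_sdiff_of_subset hSsub, card_onesF hN, hScard]
      · simp [hv0, hv1]; omega
      · rw [Finset.disjoint_left]
        intro x hx hxS
        simp only [Finset.mem_filter, Finset.mem_sdiff] at hx hxS; simp only [istwo, isone] at hx hxS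
        omega
    · by_cases hv2 : (v:ℕ) < 2 + q2
      · have hvt : istwo q2 v := ⟨by omega, hv2⟩
        have hfil : (Finset.univ.filter (fun u => matB q2 q1 S v u = true)) =
            (Finset.univ.filter (fun u : Fin (N+2) => 0 ≤ (u:ℕ) ∧ (u:ℕ) < 2)) := by
          ext u
          simp only [Finset.mem_filter, Finset.mem_univ, true_and, matB_eq_true]
          constructor
          · rintro (⟨h, _⟩ | ⟨h, _⟩ | ⟨h, _⟩ | ⟨h, _⟩) <;> omega
          · intro h
            have h01 : (u:ℕ) = 0 ∨ (u:ℕ) = 1 := by omega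
            rcases h01 with h0 | h0
            · exact Or.inr (Or.inl ⟨h0, Or.inl hvt⟩)
            · exact Or.inr (Or.inr (Or.inr ⟨h0, Or.inl hvt⟩))
        rw [hfil, card_val_filter 0 2 (by omega)]
        simp [hv0, hv1, hv2]
      · by_cases hv3 : (v:ℕ) < 2 + q2 + q1
        · have hvo : isone q2 q1 v := ⟨by omega, hv3⟩
          by_cases hvS : v ∈ S
          · have hfil : (Finset.univ.filter (fun u => matB q2 q1 S v u = true)) =
                (Finset.univ.filter (fun u : Fin (N+2) => 0 ≤ (u:ℕ) ∧ (u:ℕ) < 1)) := by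
              ext u
              simp only [Finset.mem_filter, Finset.mem_univ, true_and, matB_eq_true]
              constructor
              · rintro (⟨h, h'⟩ | ⟨h, h'⟩ | ⟨h, h'⟩ | ⟨h, h'⟩)
                · omega
                · omega
                · omega
                · rcases h' with ht | ⟨_, hns⟩
                  · exact absurd ht.2 hv2
                  · exact absurd hvS hns
              · intro h
                have h0 : (u:ℕ) = 0 := by omega
                exact Or.inr (Or.inl ⟨h0, Or.inr hvS⟩)
            rw [hfil, card_val_filter 0 1 (by omega)]
            simp [hv0, hv1, hv2, hv3]
          · have hfil : (Finset.univ.filter (fun u => matB q2 q1 S v u = true)) =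
                (Finset.univ.filter (fun u : Fin (N+2) => 1 ≤ (u:ℕ) ∧ (u:ℕ) < 2)) := by
              ext u
              simp only [Finset.mem_filter, Finset.mem_univ, true_and, matB_eq_true]
              constructor
              · rintro (⟨h, h'⟩ | ⟨h, h'⟩ | ⟨h, h'⟩ | ⟨h, h'⟩)
                · omega
                · rcases h' with ht | hsx
                  · exact absurd ht.2 hv2
                  · exact absurd hsx hvS
                · omega
                · omega
              · intro h
                have h0 : (u:ℕ) = 1 := by omega
                exact Or.inr (Or.inr (Or.inr ⟨h0, Or.inr ⟨hvo, hvS⟩⟩))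
            rw [hfil, card_val_filter 1 2 (by omega)]
            simp [hv0, hv1, hv2, hv3]
        · have hfil : (Finset.univ.filter (fun u => matB q2 q1 S v u = true)) =
              (∅ : Finset (Fin (N+2))) := by
            ext u
            simp only [Finset.mem_filter, Finset.mem_univ, true_and, matB_eq_true,
              Finset.notMem_empty, iff_false]
            rintro (⟨h, h'⟩ | ⟨h, h'⟩ | ⟨h, h'⟩ | ⟨h, h'⟩)
            · omega
            · rcases h' with ht | hs
              · exact absurd ht.2 hv2
              · exact absurd (hS _ hs).2 hv3
            · omega
            · rcases h' with ht | ⟨ho, _⟩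
              · exact absurd ht.2 hv2
              · exact absurd ho.2 hv3
          rw [hfil]
          simp [hv0, hv1, hv2, hv3]


lemma matB_symm (S : Finset (Fin (N+2))) (u v : Fin (N+2)) :
    matB q2 q1 S u v = matB q2 q1 S v u := by
  simp only [matB, decide_eq_decide]
  unfold P
  tauto

lemma matB_loop {S : Finset (Fin (N+2))} (hS : ∀ v ∈ S, isone q2 q1 v)
    (v : Fin (N+2)) : matB q2 q1 S v v = false := by
  have hP : ¬ P q2 q1 S v v := by
    rintro (⟨h, h'⟩ | ⟨h, h'⟩ | ⟨h, h'⟩ | ⟨h, h'⟩)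
    · rcases h' with ht | hs
      · exact absurd ht.1 (by omega)
      · exact absurd (hS v hs).1 (by omega)
    · rcases h' with ht | hs
      · exact absurd ht.1 (by omega)
      · exact absurd (hS v hs).1 (by omega)
    · rcases h' with ht | ⟨ho, _⟩
      · exact absurd ht.1 (by omega)
      · exact absurd ho.1 (by omega)
    · rcases h' with ht | ⟨ho, _⟩
      · exact absurd ht.1 (by omega)
      · exact absurd ho.1 (by omega)
  simp [matB, hP]

lemma matB_zero {S : Finset (Fin (N+2))} (hS : ∀ v ∈ S, isone q2 q1 v)
    (v : Fin (N+2)) : matB q2 q1 S 0 v = true ↔ istwo q2 v ∨ v ∈ S := by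
  have hval0 : ((0 : Fin (N+2)) : ℕ) = 0 := rfl
  rw [matB_eq_true]
  constructor
  · rintro (⟨h, h'⟩ | ⟨h, h'⟩ | ⟨h, h'⟩ | ⟨h, h'⟩)
    · exact h'
    · rcases h' with ht | hs
      · exact absurd ht.1 (by rw [hval0]; omega)
      · exact absurd (hS _ hs).1 (by rw [hval0]; omega)
    · exact absurd h (by rw [hval0]; omega)
    · rcases h' with ht | ⟨ho, _⟩
      · exact absurd ht.1 (by rw [hval0]; omega)
      · exact absurd ho.1 (by rw [hval0]; omega)
  · intro h
    exact Or.inl ⟨hval0, h⟩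

end main
end Stmt8

open Stmt8 in
/-- Lemma (Appendix B): for the degree sequence
`(a₁, a₂, 2,…,2 (q₂ times), 1,…,1 (q₁ times), 0,…,0)` with
`q₁ + 2q₂ = a₁ + a₂` and `a₁, a₂ ≥ q₂`, the number of undirected loopless
simple graphs realizing it in which nodes `1` and `2` are not adjacent is
`C(a₁ + a₂ - 2q₂, a₁ - q₂)`. -/
theorem stmt_8 (N a1 a2 q1 q2 : ℕ)
    (hsum : q1 + 2 * q2 = a1 + a2)
    (h1 : q2 ≤ a1) (h2 : q2 ≤ a2)
    (hN : q2 + q1 ≤ N) :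
    Nat.card {A : Fin (N + 2) → Fin (N + 2) → Bool //
        (∀ u v, A u v = A v u) ∧ (∀ v, A v v = false) ∧
        (∀ v, udeg A v =
          (if (v : ℕ) = 0 then a1 else if (v : ℕ) = 1 then a2
           else if (v : ℕ) < 2 + q2 then 2
           else if (v : ℕ) < 2 + q2 + q1 then 1 else 0)) ∧
        A 0 1 = false} =
      Nat.choose (a1 + a2 - 2 * q2) (a1 - q2) := by
  classical
  have hval1 : ((1 : Fin (N+2)) : ℕ) = 1 := rfl
  have hsum' : q1 + 2 * q2 = a1 + a2 := hsum
  have e : {A : Fin (N + 2) → Fin (N + 2) → Bool //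
        (∀ u v, A u v = A v u) ∧ (∀ v, A v v = false) ∧
        (∀ v, udeg A v =
          (if (v : ℕ) = 0 then a1 else if (v : ℕ) = 1 then a2
           else if (v : ℕ) < 2 + q2 then 2
           else if (v : ℕ) < 2 + q2 + q1 then 1 else 0)) ∧
        A 0 1 = false} ≃
      {S : Finset (Fin (N+2)) // S ∈ Finset.powersetCard (a1 - q2)
        (Finset.univ.filter (fun v : Fin (N+2) => isone q2 q1 v))} := by
    refine ⟨fun x => ⟨Finset.univ.filter
        (fun v : Fin (N+2) => isone q2 q1 v ∧ x.1 0 v = true), ?_⟩,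
      fun s => ⟨matB q2 q1 s.1, ?_⟩, ?_, ?_⟩
    · obtain ⟨A, hsym, hloop, hdeg, h01⟩ := x
      rw [Finset.mem_powersetCard]
      constructor
      · intro y hy
        simp only [Finset.mem_filter, Finset.mem_univ, true_and] at hy ⊢
        exact hy.1
      · exact (char_good hsum h1 h2 hN A hsym hloop hdeg h01).2.2.1
    · have hmem := Finset.mem_powersetCard.mp s.2
      have hS : ∀ v ∈ s.1, isone q2 q1 v := fun v hv => by
        have := hmem.1 hv
        simpa using this
      refine ⟨matB_symm s.1, matB_loop hS, udeg_matB hsum h1 h2 hN hS hmem.2, ?_⟩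
      cases hB : matB q2 q1 s.1 0 1
      · rfl
      · rcases (matB_zero hS 1).mp hB with ht | hs
        · exact absurd ht.1 (by rw [hval1]; omega)
        · exact absurd (hS _ hs).1 (by rw [hval1]; omega)
    · intro x
      apply Subtype.ext
      obtain ⟨hsym, hloop, hdeg, h01⟩ := x.2
      exact ((char_good hsum h1 h2 hN x.1 hsym hloop hdeg h01).2.2.2).symm
    · intro s
      apply Subtype.ext
      have hmem := Finset.mem_powersetCard.mp s.2
      have hS : ∀ v ∈ s.1, isone q2 q1 v := fun v hv => by
        have := hmem.1 hv
        simpa using this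
      ext v
      simp only [Finset.mem_filter, Finset.mem_univ, true_and]
      rw [matB_zero hS v]
      constructor
      · rintro ⟨ho, ht | hs⟩
        · exact absurd ht.2 (by have := ho.1; omega)
        · exact hs
      · intro hv
        exact ⟨hS v hv, Or.inr hv⟩
  rw [Nat.card_congr e, Nat.card_eq_finsetCard, Finset.card_powersetCard,
    card_onesF hN]
  congr 1
  omega
end

section
/- Consider a bidegree sequence with in-degrees a = (a_1, a_2, 0, ..., 0), out-degrees b = (δ, δ, 2, ..., 2, 1, ..., 1, 0, ..., 0) where δ ∈ {0,1}, 2 appears q times, Σ_i a_i = Σ_i b_i = S, and a_1, a_2 ≥ q + δ. Then the number of directed graphs without loops realizing this bidegree sequence equals C(a_1 + a_2 - 2δ - 2q, a_1 - δ - q). -/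
namespace Stmt9

lemma outDeg_eq_pair {N : ℕ} (A : Fin (N+2) → Fin (N+2) → Bool)
    (hzero : ∀ u v : Fin (N+2), 2 ≤ (v : ℕ) → A u v = false) (u : Fin (N+2)) :
    outDeg A u = (if A u 0 = true then 1 else 0) + (if A u 1 = true then 1 else 0) := by
  have h01 : (0 : Fin (N+2)) ≠ 1 := by
    intro h; have := congrArg Fin.val h; simp at this
  have hset : Finset.univ.filter (fun v => A u v = true)
      = ({0, 1} : Finset (Fin (N+2))).filter (fun v => A u v = true) := by
    ext v
    simp only [Finset.mem_filter, Finset.mem_univ, true_and, Finset.mem_insert,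
      Finset.mem_singleton]
    constructor
    · intro hv
      refine ⟨?_, hv⟩
      by_contra hc
      push_neg at hc
      obtain ⟨h0, h1⟩ := hc
      have h2 : 2 ≤ (v : ℕ) := by
        have hv0 : (v:ℕ) ≠ 0 := fun h => h0 (Fin.ext (by simpa using h))
        have hv1 : (v:ℕ) ≠ 1 := fun h => h1 (Fin.ext (by simpa using h))
        omega
      rw [hzero u v h2] at hv; exact absurd hv (by simp)
    · exact fun h => h.2
  rw [outDeg, hset, Finset.filter_insert, Finset.filter_singleton]
  by_cases h0 : A u 0 = true <;> by_cases h1 : A u 1 = true <;>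
    simp [h0, h1, h01]

lemma card_filter_eq_sum {M : ℕ} (p : Fin M → Bool) :
    (Finset.univ.filter (fun u => p u = true)).card
      = ∑ j ∈ Finset.range M, (if h : j < M then (if p ⟨j, h⟩ = true then 1 else 0) else 0) := by
  rw [Finset.card_filter,
    ← Fin.sum_univ_eq_sum_range (fun j => if h : j < M then (if p ⟨j, h⟩ = true then 1 else 0) else 0) M]
  exact Finset.sum_congr rfl fun i _ => by simp [i.isLt]



lemma sum_split (f : ℕ → ℕ) (q r M : ℕ) (h : 2+q+r ≤ M+2) :
    ∑ j ∈ Finset.range (M+2), f j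
      = f 0 + f 1 + (∑ j ∈ Finset.Ico 2 (2+q), f j)
        + (∑ j ∈ Finset.Ico (2+q) (2+q+r), f j) + ∑ j ∈ Finset.Ico (2+q+r) (M+2), f j := by
  rw [Finset.range_eq_Ico,
    ← Finset.sum_Ico_consecutive f (by omega : (0:ℕ) ≤ 2+q+r) (by omega : 2+q+r ≤ M+2),
    ← Finset.sum_Ico_consecutive f (by omega : (0:ℕ) ≤ 2+q) (by omega : 2+q ≤ 2+q+r),
    ← Finset.sum_Ico_consecutive f (by omega : (0:ℕ) ≤ 2) (by omega : 2 ≤ 2+q)]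
  have : ∑ j ∈ Finset.Ico 0 2, f j = f 0 + f 1 := by
    rw [← Finset.range_eq_Ico]
    simp [Finset.sum_range_succ]
  rw [this]

set_option maxHeartbeats 1600000 in
lemma count_aux {N q r δ : ℕ} (hδ : δ ≤ 1) (hb : 2+q+r ≤ N+2) (p : Fin (N+2) → Bool)
    (emb : Fin r → Fin (N+2)) (hemb : ∀ i : Fin r, (emb i : ℕ) = 2+q+(i:ℕ))
    (h01 : (if p 0 = true then 1 else 0) + (if p 1 = true then 1 else 0) = δ)
    (hmid : ∀ j (hj : 2 ≤ j ∧ j < 2+q), p ⟨j, by omega⟩ = true)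
    (htail : ∀ j (hj : 2+q+r ≤ j ∧ j < N+2), ¬ p ⟨j, hj.2⟩ = true) :
    (Finset.univ.filter (fun u => p u = true)).card
      = δ + q + (Finset.univ.filter (fun i : Fin r => p (emb i) = true)).card := by
  rw [card_filter_eq_sum, sum_split _ q r N hb]
  have m0 : (⟨0, by omega⟩ : Fin (N+2)) = 0 := by ext; simp
  have m1 : (⟨1, by omega⟩ : Fin (N+2)) = 1 := by ext; simp
  have e0 : (if h : 0 < N+2 then (if p ⟨0, h⟩ = true then 1 else 0) else 0)
      = (if p 0 = true then 1 else 0) := by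
    rw [dif_pos (by omega), m0]
  have e1 : (if h : 1 < N+2 then (if p ⟨1, h⟩ = true then 1 else 0) else 0)
      = (if p 1 = true then 1 else 0) := by
    rw [dif_pos (by omega), m1]
  have e2 : ∑ j ∈ Finset.Ico 2 (2+q),
      (if h : j < N+2 then (if p ⟨j, h⟩ = true then 1 else 0) else 0) = q := by
    have step : ∀ j ∈ Finset.Ico 2 (2+q),
        (if h : j < N+2 then (if p ⟨j, h⟩ = true then 1 else 0) else 0) = 1 := by
      intro j hj
      rw [Finset.mem_Ico] at hj
      rw [dif_pos (by omega), if_pos (hmid j ⟨hj.1, hj.2⟩)]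
    rw [Finset.sum_congr rfl step, Finset.sum_const, Nat.card_Ico, smul_eq_mul]
    omega
  have e4 : ∑ j ∈ Finset.Ico (2+q+r) (N+2),
      (if h : j < N+2 then (if p ⟨j, h⟩ = true then 1 else 0) else 0) = 0 := by
    apply Finset.sum_eq_zero
    intro j hj
    rw [Finset.mem_Ico] at hj
    rw [dif_pos hj.2, if_neg (htail j ⟨hj.1, hj.2⟩)]
  have e3 : ∑ j ∈ Finset.Ico (2+q) (2+q+r),
      (if h : j < N+2 then (if p ⟨j, h⟩ = true then 1 else 0) else 0)
      = (Finset.univ.filter (fun i : Fin r => p (emb i) = true)).card := by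
    rw [Finset.sum_Ico_eq_sum_range]
    have hrr : 2+q+r - (2+q) = r := by omega
    rw [hrr, card_filter_eq_sum (fun i : Fin r => p (emb i))]
    apply Finset.sum_congr rfl
    intro j hj
    rw [Finset.mem_range] at hj
    rw [dif_pos (by omega : 2+q+j < N+2), dif_pos hj]
    have hfin : (⟨2+q+j, by omega⟩ : Fin (N+2)) = emb ⟨j, hj⟩ := Fin.ext (hemb ⟨j, hj⟩).symm
    rw [hfin]
  rw [e0, e1, e2, e3, e4]
  omega


def bwd (N q δ r : ℕ) (s : Finset (Fin r)) : Fin (N+2) → Fin (N+2) → Bool :=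
  fun u v =>
    if (v : ℕ) = 0 then
      decide (((u:ℕ) = 1 ∧ δ = 1) ∨ (2 ≤ (u:ℕ) ∧ (u:ℕ) < 2+q)
        ∨ ∃ i : Fin r, i ∈ s ∧ (u:ℕ) = 2+q+(i:ℕ))
    else if (v : ℕ) = 1 then
      decide (((u:ℕ) = 0 ∧ δ = 1) ∨ (2 ≤ (u:ℕ) ∧ (u:ℕ) < 2+q)
        ∨ ∃ i : Fin r, i ∉ s ∧ (u:ℕ) = 2+q+(i:ℕ))
    else false

variable {N q δ r : ℕ} {s : Finset (Fin r)}

lemma bwd_col0_iff (u : Fin (N+2)) :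
    bwd N q δ r s u 0 = true ↔
      (((u:ℕ) = 1 ∧ δ = 1) ∨ (2 ≤ (u:ℕ) ∧ (u:ℕ) < 2+q)
        ∨ ∃ i : Fin r, i ∈ s ∧ (u:ℕ) = 2+q+(i:ℕ)) := by
  simp [bwd]

lemma bwd_col1_iff (u : Fin (N+2)) :
    bwd N q δ r s u 1 = true ↔
      (((u:ℕ) = 0 ∧ δ = 1) ∨ (2 ≤ (u:ℕ) ∧ (u:ℕ) < 2+q)
        ∨ ∃ i : Fin r, i ∉ s ∧ (u:ℕ) = 2+q+(i:ℕ)) := by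
  simp [bwd]

lemma bwd_ge2 (u v : Fin (N+2)) (hv : 2 ≤ (v:ℕ)) : bwd N q δ r s u v = false := by
  rw [bwd, if_neg (by omega), if_neg (by omega)]

lemma bwd_loop (v : Fin (N+2)) : bwd N q δ r s v v = false := by
  rw [bwd]
  by_cases h0 : (v:ℕ) = 0
  · rw [if_pos h0, decide_eq_false]
    rintro (⟨h,_⟩|⟨h,_⟩|⟨i,_,h⟩) <;> omega
  · rw [if_neg h0]
    by_cases h1 : (v:ℕ) = 1
    · rw [if_pos h1, decide_eq_false]
      rintro (⟨h,_⟩|⟨h,_⟩|⟨i,_,h⟩) <;> omega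
    · rw [if_neg h1]

lemma bwd_emb0 (u : Fin (N+2)) (i : Fin r) (hu : (u:ℕ) = 2+q+(i:ℕ)) :
    bwd N q δ r s u 0 = true ↔ i ∈ s := by
  rw [bwd_col0_iff]
  constructor
  · rintro (⟨h,_⟩|⟨_,h⟩|⟨i',hi',h⟩)
    · omega
    · omega
    · have : i' = i := by
        have hv : (i':ℕ) = (i:ℕ) := by omega
        exact Fin.ext hv
      rwa [this] at hi'
  · intro hi
    exact Or.inr (Or.inr ⟨i, hi, hu⟩)

lemma bwd_emb1 (u : Fin (N+2)) (i : Fin r) (hu : (u:ℕ) = 2+q+(i:ℕ)) :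
    bwd N q δ r s u 1 = true ↔ i ∉ s := by
  rw [bwd_col1_iff]
  constructor
  · rintro (⟨h,_⟩|⟨_,h⟩|⟨i',hi',h⟩)
    · omega
    · omega
    · have : i' = i := by
        have hv : (i':ℕ) = (i:ℕ) := by omega
        exact Fin.ext hv
      rwa [this] at hi'
  · intro hi
    exact Or.inr (Or.inr ⟨i, hi, hu⟩)


lemma filter_emb0 (hb : 2+q+r ≤ N+2) :
    Finset.univ.filter
      (fun i : Fin r => bwd N q δ r s ⟨2+q+(i:ℕ), by have := i.isLt; omega⟩ 0 = true) = s := by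
  ext i
  simp only [Finset.mem_filter, Finset.mem_univ, true_and]
  rw [bwd_emb0 _ i rfl]

lemma filter_emb1 (hb : 2+q+r ≤ N+2) :
    Finset.univ.filter
      (fun i : Fin r => bwd N q δ r s ⟨2+q+(i:ℕ), by have := i.isLt; omega⟩ 1 = true) = sᶜ := by
  ext i
  simp only [Finset.mem_filter, Finset.mem_univ, true_and, Finset.mem_compl]
  rw [bwd_emb1 _ i rfl]

lemma bwd_at00 : bwd N q δ r s 0 0 = false := by
  rw [Bool.eq_false_iff]
  intro hc
  rw [bwd_col0_iff] at hc
  rcases hc with ⟨h,_⟩|⟨h,_⟩|⟨i,_,h⟩ <;> simp at h <;> omega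

lemma bwd_at11 : bwd N q δ r s 1 1 = false := by
  rw [Bool.eq_false_iff]
  intro hc
  rw [bwd_col1_iff] at hc
  rcases hc with ⟨h,_⟩|⟨h,_⟩|⟨i,_,h⟩ <;> simp at h <;> omega

lemma bwd_at10 : bwd N q δ r s 1 0 = true ↔ δ = 1 := by
  rw [bwd_col0_iff]
  constructor
  · rintro (⟨_,h⟩|⟨h,_⟩|⟨i,_,h⟩)
    · exact h
    · simp at h
    · simp at h; omega
  · intro h
    exact Or.inl ⟨by simp, h⟩

lemma bwd_at01 : bwd N q δ r s 0 1 = true ↔ δ = 1 := by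
  rw [bwd_col1_iff]
  constructor
  · rintro (⟨_,h⟩|⟨h,_⟩|⟨i,_,h⟩)
    · exact h
    · simp at h
    · simp at h; omega
  · intro h
    exact Or.inl ⟨by simp, h⟩

lemma bwd_mid0 (u : Fin (N+2)) (h : 2 ≤ (u:ℕ) ∧ (u:ℕ) < 2+q) :
    bwd N q δ r s u 0 = true := by
  rw [bwd_col0_iff]; exact Or.inr (Or.inl h)

lemma bwd_mid1 (u : Fin (N+2)) (h : 2 ≤ (u:ℕ) ∧ (u:ℕ) < 2+q) :
    bwd N q δ r s u 1 = true := by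
  rw [bwd_col1_iff]; exact Or.inr (Or.inl h)

lemma bwd_tail0 (u : Fin (N+2)) (h : 2+q+r ≤ (u:ℕ)) :
    ¬ bwd N q δ r s u 0 = true := by
  rw [bwd_col0_iff]
  rintro (⟨h1,_⟩|⟨_,h1⟩|⟨i,_,h1⟩) <;> [omega; omega; skip]
  have := i.isLt; omega

lemma bwd_tail1 (u : Fin (N+2)) (h : 2+q+r ≤ (u:ℕ)) :
    ¬ bwd N q δ r s u 1 = true := by
  rw [bwd_col1_iff]
  rintro (⟨h1,_⟩|⟨_,h1⟩|⟨i,_,h1⟩) <;> [omega; omega; skip]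
  have := i.isLt; omega

lemma ind_delta {δ : ℕ} (b : Bool) (h : (b = true) ↔ δ = 1) (hδ : δ ≤ 1) :
    (if b = true then 1 else 0) = δ := by
  by_cases hb : b = true
  · rw [if_pos hb, h.mp hb]
  · rw [if_neg hb]
    have : ¬ δ = 1 := fun hc => hb (h.mpr hc)
    omega

set_option maxHeartbeats 1600000 in
lemma inDeg_bwd0 (hδ : δ ≤ 1) (hb : 2+q+r ≤ N+2) :
    inDeg (bwd N q δ r s) 0 = δ + q + s.card := by
  rw [inDeg, count_aux hδ hb (fun u => bwd N q δ r s u 0)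
      (fun i => ⟨2+q+(i:ℕ), by have := i.isLt; omega⟩) (fun i => rfl)
      (by beta_reduce; rw [bwd_at00, ind_delta _ bwd_at10 hδ]; simp)
      (fun j hj => bwd_mid0 _ (by constructor <;> simp <;> omega))
      (fun j hj => bwd_tail0 _ (by simp; omega)),
    filter_emb0 hb]

set_option maxHeartbeats 1600000 in
lemma inDeg_bwd1 (hδ : δ ≤ 1) (hb : 2+q+r ≤ N+2) :
    inDeg (bwd N q δ r s) 1 = δ + q + (r - s.card) := by
  rw [inDeg, count_aux hδ hb (fun u => bwd N q δ r s u 1)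
      (fun i => ⟨2+q+(i:ℕ), by have := i.isLt; omega⟩) (fun i => rfl)
      (by beta_reduce; rw [bwd_at11, ind_delta _ bwd_at01 hδ]; simp)
      (fun j hj => bwd_mid1 _ (by constructor <;> simp <;> omega))
      (fun j hj => bwd_tail1 _ (by simp; omega)),
    filter_emb1 hb, Finset.card_compl, Fintype.card_fin]

lemma inDeg_bwd_ge2 (v : Fin (N+2)) (hv : 2 ≤ (v:ℕ)) :
    inDeg (bwd N q δ r s) v = 0 := by
  rw [inDeg, Finset.card_eq_zero, Finset.eq_empty_iff_forall_notMem]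
  intro u hu
  rw [Finset.mem_filter] at hu
  rw [bwd_ge2 u v hv] at hu
  exact absurd hu.2 (by simp)


lemma outDeg_bwd (hδ : δ ≤ 1) (u : Fin (N+2)) :
    outDeg (bwd N q δ r s) u =
      if (u:ℕ) < 2 then δ else if (u:ℕ) < 2+q then 2
      else if (u:ℕ) < 2+q+r then 1 else 0 := by
  rw [outDeg_eq_pair _ (fun u v hv => bwd_ge2 u v hv) u]
  by_cases hu2 : (u:ℕ) < 2
  · rw [if_pos hu2]
    by_cases hu0 : (u:ℕ) = 0
    · have hu : u = 0 := Fin.ext (by simpa using hu0)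
      rw [hu, bwd_at00, ind_delta _ bwd_at01 hδ]
      simp
    · have hu : u = 1 := Fin.ext (by simp; omega)
      rw [hu, ind_delta _ bwd_at10 hδ, bwd_at11]
      simp
  · rw [if_neg hu2]
    by_cases huq : (u:ℕ) < 2+q
    · rw [if_pos huq, bwd_mid0 u ⟨by omega, huq⟩, bwd_mid1 u ⟨by omega, huq⟩]
      simp
    · rw [if_neg huq]
      by_cases hur : (u:ℕ) < 2+q+r
      · rw [if_pos hur]
        have hiv : (u:ℕ) - (2+q) < r := by omega
        set i : Fin r := ⟨(u:ℕ) - (2+q), hiv⟩ with hi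
        have hu : (u:ℕ) = 2+q+(i:ℕ) := by
          have : (i:ℕ) = (u:ℕ) - (2+q) := rfl
          omega
        by_cases his : i ∈ s
        · rw [if_pos ((bwd_emb0 u i hu).mpr his),
            if_neg (fun hc => (bwd_emb1 u i hu).mp hc his)]
        · rw [if_neg (fun hc => his ((bwd_emb0 u i hu).mp hc)),
            if_pos ((bwd_emb1 u i hu).mpr his)]
      · rw [if_neg hur, if_neg (bwd_tail0 u (by omega)), if_neg (bwd_tail1 u (by omega))]

lemma structure_of (hδ : δ ≤ 1) {a1 a2 : ℕ}
    (A : Fin (N+2) → Fin (N+2) → Bool)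
    (hloop : ∀ v, A v v = false)
    (hin : ∀ v : Fin (N+2), inDeg A v =
      if (v:ℕ) = 0 then a1 else if (v:ℕ) = 1 then a2 else 0)
    (hout : ∀ v : Fin (N+2), outDeg A v =
      if (v:ℕ) < 2 then δ else if (v:ℕ) < 2+q then 2
      else if (v:ℕ) < 2+q+r then 1 else 0) :
    (∀ u v : Fin (N+2), 2 ≤ (v:ℕ) → A u v = false) ∧
    ((A 0 1 = true) ↔ δ = 1) ∧ ((A 1 0 = true) ↔ δ = 1) ∧
    (∀ u : Fin (N+2), 2 ≤ (u:ℕ) → (u:ℕ) < 2+q → A u 0 = true ∧ A u 1 = true) ∧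
    (∀ u : Fin (N+2), 2+q ≤ (u:ℕ) → (u:ℕ) < 2+q+r →
      ((A u 0 = true) ↔ ¬ A u 1 = true)) ∧
    (∀ u : Fin (N+2), 2+q+r ≤ (u:ℕ) → A u 0 = false ∧ A u 1 = false) := by
  have hzero : ∀ u v : Fin (N+2), 2 ≤ (v:ℕ) → A u v = false := by
    intro u v hv
    have h := hin v
    rw [if_neg (by omega), if_neg (by omega), inDeg, Finset.card_eq_zero] at h
    by_contra hc
    rw [Bool.not_eq_false] at hc
    have hm : u ∈ Finset.univ.filter (fun u => A u v = true) := by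
      rw [Finset.mem_filter]; exact ⟨Finset.mem_univ u, hc⟩
    rw [h] at hm
    exact absurd hm (Finset.notMem_empty u)
  have pair := outDeg_eq_pair A hzero
  refine ⟨hzero, ?_, ?_, ?_, ?_, ?_⟩
  · have h := pair 0
    rw [hout 0, if_pos (by simp), hloop 0] at h
    cases hA : A 0 1 <;> simp [hA] at h ⊢ <;> omega
  · have h := pair 1
    rw [hout 1, if_pos (by simp), hloop 1] at h
    cases hA : A 1 0 <;> simp [hA] at h ⊢ <;> omega
  · intro u h2 hq
    have h := pair u
    rw [hout u, if_neg (by omega), if_pos (by omega)] at h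
    cases hA : A u 0 <;> cases hB : A u 1 <;> simp [hA, hB] at h ⊢
  · intro u hl hr2
    have h := pair u
    rw [hout u, if_neg (by omega), if_neg (by omega), if_pos (by omega)] at h
    cases hA : A u 0 <;> cases hB : A u 1 <;> simp [hA, hB] at h ⊢
  · intro u hl
    have h := pair u
    rw [hout u, if_neg (by omega), if_neg (by omega), if_neg (by omega)] at h
    cases hA : A u 0 <;> cases hB : A u 1 <;> simp [hA, hB] at h ⊢


set_option maxHeartbeats 1600000 in
lemma fwd_card (hδ : δ ≤ 1) (hb : 2+q+r ≤ N+2) {a1 a2 : ℕ} (ha1 : q + δ ≤ a1)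
    (emb : Fin r → Fin (N+2)) (hemb : ∀ i : Fin r, (emb i : ℕ) = 2+q+(i:ℕ))
    (A : Fin (N+2) → Fin (N+2) → Bool)
    (hloop : ∀ v, A v v = false)
    (hin : ∀ v : Fin (N+2), inDeg A v =
      if (v:ℕ) = 0 then a1 else if (v:ℕ) = 1 then a2 else 0)
    (hout : ∀ v : Fin (N+2), outDeg A v =
      if (v:ℕ) < 2 then δ else if (v:ℕ) < 2+q then 2
      else if (v:ℕ) < 2+q+r then 1 else 0) :
    (Finset.univ.filter (fun i : Fin r => A (emb i) 0 = true)).card = a1 - δ - q := by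
  obtain ⟨hzero, h01, h10, hmid, hD, htail⟩ := structure_of hδ A hloop hin hout
  have hc := count_aux hδ hb (fun u => A u 0) emb hemb
      (by beta_reduce; rw [hloop 0, ind_delta _ h10 hδ]; simp)
      (fun j hj => (hmid ⟨j, by omega⟩ hj.1 hj.2).1)
      (fun j hj hcc => by
        have hcc' : A ⟨j, hj.2⟩ 0 = true := hcc
        rw [(htail ⟨j, hj.2⟩ hj.1).1] at hcc'
        exact absurd hcc' (by simp))
  have hin0 := hin 0
  rw [if_pos (by simp)] at hin0
  have heq : δ + q + (Finset.univ.filter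
      (fun i : Fin r => A (emb i) 0 = true)).card = a1 := hc.symm.trans hin0
  omega

set_option maxHeartbeats 1600000 in
lemma eq_bwd (hδ : δ ≤ 1) (hb : 2+q+r ≤ N+2) {a1 a2 : ℕ}
    (A : Fin (N+2) → Fin (N+2) → Bool)
    (hloop : ∀ v, A v v = false)
    (hin : ∀ v : Fin (N+2), inDeg A v =
      if (v:ℕ) = 0 then a1 else if (v:ℕ) = 1 then a2 else 0)
    (hout : ∀ v : Fin (N+2), outDeg A v =
      if (v:ℕ) < 2 then δ else if (v:ℕ) < 2+q then 2
      else if (v:ℕ) < 2+q+r then 1 else 0) :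
    bwd N q δ r (Finset.univ.filter
      (fun i : Fin r => A ⟨2+q+(i:ℕ), by have := i.isLt; omega⟩ 0 = true)) = A := by
  obtain ⟨hzero, h01, h10, hmid, hD, htail⟩ := structure_of hδ A hloop hin hout
  set S := Finset.univ.filter
      (fun i : Fin r => A ⟨2+q+(i:ℕ), by have := i.isLt; omega⟩ 0 = true) with hS
  have hmemS : ∀ i : Fin r,
      i ∈ S ↔ A ⟨2+q+(i:ℕ), by have := i.isLt; omega⟩ 0 = true := by
    intro i
    rw [hS, Finset.mem_filter]
    simp
  funext u v
  by_cases hv0 : (v:ℕ) = 0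
  · have hv : v = 0 := Fin.ext (by simpa using hv0)
    subst hv
    rw [Bool.eq_iff_iff, bwd_col0_iff]
    by_cases hu0 : (u:ℕ) = 0
    · have hu : u = 0 := Fin.ext (by simpa using hu0)
      subst hu
      constructor
      · rintro (⟨h,_⟩|⟨h,_⟩|⟨i,_,h⟩) <;> simp at h <;> omega
      · intro hA
        exact absurd hA (by simp [hloop 0])
    · by_cases hu1 : (u:ℕ) = 1
      · have hu : u = 1 := Fin.ext (by simpa using hu1)
        subst hu
        rw [h10]
        constructor
        · rintro (⟨_,h⟩|⟨h,_⟩|⟨i,_,h⟩)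
          · exact h
          · simp at h
          · simp at h; have := i.isLt; omega
        · intro h
          exact Or.inl ⟨by simp, h⟩
      · by_cases huq : (u:ℕ) < 2+q
        · have hA := (hmid u (by omega) huq).1
          constructor
          · intro _; exact hA
          · intro _; exact Or.inr (Or.inl ⟨by omega, huq⟩)
        · by_cases hur : (u:ℕ) < 2+q+r
          · have hiv : (u:ℕ) - (2+q) < r := by omega
            set i : Fin r := ⟨(u:ℕ)-(2+q), hiv⟩ with hidef
            have hui : (u:ℕ) = 2+q+(i:ℕ) := by
              have : (i:ℕ) = (u:ℕ)-(2+q) := rfl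
              omega
            have hnode : (⟨2+q+(i:ℕ), by have := i.isLt; omega⟩ : Fin (N+2)) = u :=
              Fin.ext hui.symm
            constructor
            · rintro (⟨h,_⟩|⟨_,h⟩|⟨i',hi',h⟩)
              · omega
              · omega
              · have hii : i' = i := Fin.ext (by omega)
                subst hii
                rw [hmemS, hnode] at hi'
                exact hi'
            · intro hA
              refine Or.inr (Or.inr ⟨i, ?_, hui⟩)
              rw [hmemS, hnode]
              exact hA
          · constructor
            · rintro (⟨h,_⟩|⟨_,h⟩|⟨i,_,h⟩)
              · omega
              · omega
              · have := i.isLt; omega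
            · intro hA
              rw [(htail u (by omega)).1] at hA
              exact absurd hA (by simp)
  · by_cases hv1 : (v:ℕ) = 1
    · have hv : v = 1 := Fin.ext (by simpa using hv1)
      subst hv
      rw [Bool.eq_iff_iff, bwd_col1_iff]
      by_cases hu0 : (u:ℕ) = 0
      · have hu : u = 0 := Fin.ext (by simpa using hu0)
        subst hu
        rw [h01]
        constructor
        · rintro (⟨_,h⟩|⟨h,_⟩|⟨i,_,h⟩)
          · exact h
          · simp at h
          · simp at h; have := i.isLt; omega
        · intro h
          exact Or.inl ⟨by simp, h⟩
      · by_cases hu1 : (u:ℕ) = 1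
        · have hu : u = 1 := Fin.ext (by simpa using hu1)
          subst hu
          constructor
          · rintro (⟨h,_⟩|⟨h,_⟩|⟨i,_,h⟩) <;> simp at h <;> omega
          · intro hA
            exact absurd hA (by simp [hloop 1])
        · by_cases huq : (u:ℕ) < 2+q
          · have hA := (hmid u (by omega) huq).2
            constructor
            · intro _; exact hA
            · intro _; exact Or.inr (Or.inl ⟨by omega, huq⟩)
          · by_cases hur : (u:ℕ) < 2+q+r
            · have hiv : (u:ℕ) - (2+q) < r := by omega
              set i : Fin r := ⟨(u:ℕ)-(2+q), hiv⟩ with hidef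
              have hui : (u:ℕ) = 2+q+(i:ℕ) := by
                have : (i:ℕ) = (u:ℕ)-(2+q) := rfl
                omega
              have hnode : (⟨2+q+(i:ℕ), by have := i.isLt; omega⟩ : Fin (N+2)) = u :=
                Fin.ext hui.symm
              have hDu := hD u (by omega) hur
              constructor
              · rintro (⟨h,_⟩|⟨_,h⟩|⟨i',hi',h⟩)
                · omega
                · omega
                · have hii : i' = i := Fin.ext (by omega)
                  subst hii
                  rw [hmemS, hnode] at hi'
                  cases hA : A u 0 <;> cases hB : A u 1 <;>
                    simp [hA, hB] at hDu hi' ⊢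
              · intro hB
                refine Or.inr (Or.inr ⟨i, ?_, hui⟩)
                rw [hmemS, hnode]
                cases hA : A u 0 <;> simp [hA, hB] at hDu ⊢
            · constructor
              · rintro (⟨h,_⟩|⟨_,h⟩|⟨i,_,h⟩)
                · omega
                · omega
                · have := i.isLt; omega
              · intro hA
                rw [(htail u (by omega)).2] at hA
                exact absurd hA (by simp)
    · rw [bwd_ge2 u v (by omega), hzero u v (by omega)]

end Stmt9

set_option maxHeartbeats 1600000 in
/-- Lemma (Appendix B, directed graphs without loops): with in-degrees
`(a₁, a₂, 0,…,0)` and out-degrees `(δ, δ, 2,…,2 (q times), 1,…,1, 0,…,0)`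
where `δ ∈ {0,1}`, `∑ b = S = a₁ + a₂` and `a₁, a₂ ≥ q + δ`, the number of
loopless directed graphs realizing this bidegree sequence is
`C(a₁ + a₂ - 2δ - 2q, a₁ - δ - q)`. -/
theorem stmt_9 (N a1 a2 q δ : ℕ) (hδ : δ ≤ 1)
    (h1 : q + δ ≤ a1) (h2 : q + δ ≤ a2)
    (hq : 2 * δ + 2 * q ≤ a1 + a2)
    (hN : q + (a1 + a2 - 2 * δ - 2 * q) ≤ N) :
    Nat.card {A : Fin (N + 2) → Fin (N + 2) → Bool //
        (∀ v, A v v = false) ∧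
        (∀ v, inDeg A v =
          (if (v : ℕ) = 0 then a1 else if (v : ℕ) = 1 then a2 else 0)) ∧
        (∀ v, outDeg A v =
          (if (v : ℕ) < 2 then δ
           else if (v : ℕ) < 2 + q then 2
           else if (v : ℕ) < 2 + q + (a1 + a2 - 2 * δ - 2 * q) then 1
           else 0))} =
      Nat.choose (a1 + a2 - 2 * δ - 2 * q) (a1 - δ - q) := by

  set r := a1 + a2 - 2 * δ - 2 * q with hr
  set k := a1 - δ - q with hk
  have hb : 2 + q + r ≤ N + 2 := by omega
  have e : {A : Fin (N + 2) → Fin (N + 2) → Bool //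
        (∀ v, A v v = false) ∧
        (∀ v, inDeg A v =
          (if (v : ℕ) = 0 then a1 else if (v : ℕ) = 1 then a2 else 0)) ∧
        (∀ v, outDeg A v =
          (if (v : ℕ) < 2 then δ
           else if (v : ℕ) < 2 + q then 2
           else if (v : ℕ) < 2 + q + r then 1
           else 0))} ≃ {s : Finset (Fin r) // s.card = k} := by
    refine
      { toFun := fun A => ⟨Finset.univ.filter
          (fun i : Fin r => A.1 ⟨2+q+(i:ℕ), by have := i.isLt; omega⟩ 0 = true), ?_⟩,
        invFun := fun s => ⟨Stmt9.bwd N q δ r s.1, fun v => Stmt9.bwd_loop v, ?_, ?_⟩,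
        left_inv := ?_, right_inv := ?_ }
    · exact Stmt9.fwd_card hδ hb h1
        (fun i : Fin r => ⟨2+q+(i:ℕ), by have := i.isLt; omega⟩) (fun i => rfl)
        A.1 A.2.1 A.2.2.1 A.2.2.2
    · intro v
      by_cases hv0 : (v:ℕ) = 0
      · have hv : v = 0 := Fin.ext (by simpa using hv0)
        rw [hv, if_pos (by simp), Stmt9.inDeg_bwd0 hδ hb, s.2]
        omega
      · by_cases hv1 : (v:ℕ) = 1
        · have hv : v = 1 := Fin.ext (by simpa using hv1)
          rw [hv, if_neg (by simp), if_pos (by simp), Stmt9.inDeg_bwd1 hδ hb, s.2]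
          omega
        · rw [if_neg hv0, if_neg hv1, Stmt9.inDeg_bwd_ge2 v (by omega)]
    · intro v
      exact Stmt9.outDeg_bwd hδ v
    · intro A
      exact Subtype.ext (Stmt9.eq_bwd hδ hb A.1 A.2.1 A.2.2.1 A.2.2.2)
    · intro s
      exact Subtype.ext (Stmt9.filter_emb0 hb)
  rw [Nat.card_congr e, Nat.card_eq_fintype_card, Fintype.card_finset_len, Fintype.card_fin]
end

section
/- Let f : {1,...,N} → [0,∞) with Σ_{i=1}^N f(i) = S, max_i f(i) ≤ C·S^{1/2-τ}, and let r ≤ C·S^{1/2-τ} with r ≥ 2, for constants C > 0 and τ ∈ (0, 1/2]. Then Σ over sequences (x_1,...,x_r) of pairwise distinct indices of ∏_{i=1}^r f(x_i) equals (Σ over sequences with x_1 unconstrained and x_2,...,x_r pairwise distinct of ∏_{i=1}^r f(x_i)) − (r−1)·(Σ over sequences with x_1 = x_2 and x_2,...,x_r pairwise distinct of ∏ f(x_i)), and the second term is at most C'·S^{-2τ} times the first for a constant C' depending only on C. -/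
/-- `DistinctFrom k x` means the coordinates `x_i` with index `i ≥ k` are
pairwise distinct (coordinates with index `< k` are unconstrained). -/
abbrev DistinctFrom (k : ℕ) {r N : ℕ} (x : Fin r → Fin N) : Prop :=
  ∀ i j : Fin r, k ≤ (i : ℕ) → k ≤ (j : ℕ) → x i = x j → i = j

/-- `EqOnFirst k x` means the first `k` coordinates of `x` coincide. -/
abbrev EqOnFirst (k : ℕ) {r N : ℕ} (x : Fin r → Fin N) : Prop :=
  ∀ i j : Fin r, (i : ℕ) < k → (j : ℕ) < k → x i = x j

/-- The splitting identity and bound behind Lemma 2: for nonnegative `f` with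
`∑ f = S`, `max f ≤ C·S^{1/2-τ}` and `2 ≤ r ≤ C·S^{1/2-τ}`,
`∑_{x₁≠⋯≠x_r} ∏ f(x_i) = ∑_{x₁,x₂≠⋯≠x_r} ∏ f(x_i)
  - (r-1) ∑_{x₁=x₂≠⋯≠x_r} ∏ f(x_i)`,
and the subtracted term is at most `C'·S^{-2τ}` times the first term on the
right, for a constant `C'` depending only on `C`. -/
theorem stmt_11 (C τ : ℝ) (hC : 0 < C) (hτ : 0 < τ) (hτ' : τ ≤ 1 / 2) :
    ∃ C' > 0, ∀ (N r : ℕ) (f : Fin N → ℝ) (S : ℝ),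
      (∀ i, 0 ≤ f i) → (∑ i, f i) = S → 0 < S →
      (∀ i, f i ≤ C * S ^ ((1 : ℝ) / 2 - τ)) →
      2 ≤ r → (r : ℝ) ≤ C * S ^ ((1 : ℝ) / 2 - τ) →
      ((∑ x : Fin r → Fin N,
          if DistinctFrom 0 x then ∏ i, f (x i) else 0)
        = (∑ x : Fin r → Fin N,
            if DistinctFrom 1 x then ∏ i, f (x i) else 0)
          - ((r : ℝ) - 1) *
            (∑ x : Fin r → Fin N,
              if EqOnFirst 2 x ∧ DistinctFrom 1 x then ∏ i, f (x i) else 0))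
      ∧ ((r : ℝ) - 1) *
            (∑ x : Fin r → Fin N,
              if EqOnFirst 2 x ∧ DistinctFrom 1 x then ∏ i, f (x i) else 0)
          ≤ C' * S ^ (-(2 * τ)) *
            (∑ x : Fin r → Fin N,
              if DistinctFrom 1 x then ∏ i, f (x i) else 0) := by
  classical
  refine ⟨C ^ 2, by positivity, ?_⟩
  intro N r f S hf hsum hS hmax hr hrM
  obtain ⟨m, rfl⟩ : ∃ m, r = m + 2 := ⟨r - 2, by omega⟩
  set M := C * S ^ ((1 : ℝ) / 2 - τ) with hMdef
  have hM0 : 0 < M := by positivity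
  -- decomposition of sums via Fin.cons
  have key : ∀ (P : (Fin (m + 2) → Fin N) → Prop) (inst : DecidablePred P),
      (∑ x : Fin (m + 2) → Fin N, if P x then ∏ i, f (x i) else 0)
      = ∑ v : Fin N, ∑ y : Fin (m + 1) → Fin N,
          if P (Fin.cons v y) then f v * ∏ i, f (y i) else 0 := by
    intro P inst
    rw [← Equiv.sum_comp (Fin.consEquiv (fun _ => Fin N))
        (fun x => if P x then ∏ i, f (x i) else 0), Fintype.sum_prod_type]
    refine Finset.sum_congr rfl fun v _ => Finset.sum_congr rfl fun y _ => ?_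
    have he : (Fin.consEquiv (fun _ => Fin N)) (v, y) = Fin.cons v y := rfl
    simp only [he]
    have hp : ∏ i : Fin (m + 2), f ((Fin.cons v y : Fin (m + 2) → Fin N) i)
        = f v * ∏ i, f (y i) := by
      simp [Fin.prod_univ_succ]
    rw [hp]
  -- characterizations
  have hInj1 : ∀ (v : Fin N) (y : Fin (m + 1) → Fin N),
      DistinctFrom 1 (Fin.cons v y) ↔ Function.Injective y := by
    intro v y
    constructor
    · intro h a b hab
      have := h a.succ b.succ (by simp only [Fin.val_succ]; omega)
        (by simp only [Fin.val_succ]; omega) (by simpa using hab)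
      exact Fin.succ_injective _ this
    · intro h i j hi hj hij
      induction i using Fin.cases with
      | zero => simp at hi
      | succ a =>
        induction j using Fin.cases with
        | zero => simp at hj
        | succ b =>
          simp only [Fin.cons_succ] at hij
          exact congrArg Fin.succ (h hij)
  have hInj0 : ∀ (v : Fin N) (y : Fin (m + 1) → Fin N),
      DistinctFrom 0 (Fin.cons v y) ↔ (v ∉ Set.range y ∧ Function.Injective y) := by
    intro v y
    rw [← Fin.cons_injective_iff]
    constructor
    · intro h a b hab; exact h a b (Nat.zero_le _) (Nat.zero_le _) hab
    · intro h a b _ _ hab; exact h hab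
  have hEq2 : ∀ (v : Fin N) (y : Fin (m + 1) → Fin N),
      (EqOnFirst 2 (Fin.cons v y) ∧ DistinctFrom 1 (Fin.cons v y))
        ↔ (v = y 0 ∧ Function.Injective y) := by
    intro v y
    rw [hInj1]
    constructor
    · rintro ⟨h1, h2⟩
      refine ⟨?_, h2⟩
      have h01 := h1 0 1 (by simp) (by simp [Fin.val_one])
      rw [show (1 : Fin (m + 2)) = Fin.succ (0 : Fin (m + 1)) from
        Fin.succ_zero_eq_one.symm] at h01
      simpa using h01
    · rintro ⟨h1, h2⟩
      refine ⟨?_, h2⟩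
      have hval : ∀ i : Fin (m + 2), (i : ℕ) < 2 →
          (Fin.cons v y : Fin (m + 2) → Fin N) i = v := by
        intro i hi
        have : (i : ℕ) = 0 ∨ (i : ℕ) = 1 := by omega
        rcases this with h | h
        · have hi0 : i = 0 := Fin.ext h
          rw [hi0, Fin.cons_zero]
        · have hi1 : i = 1 := Fin.ext (by simp [h, Fin.val_one])
          rw [hi1, show (1 : Fin (m + 2)) = Fin.succ (0 : Fin (m + 1)) from
            Fin.succ_zero_eq_one.symm, Fin.cons_succ, ← h1]
      intro i j hi hj
      rw [hval i hi, hval j hj]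
  set T : ℝ := ∑ y : Fin (m + 1) → Fin N,
      if Function.Injective y then ∏ i, f (y i) else 0 with hTdef
  set D : ℝ := ∑ y : Fin (m + 1) → Fin N,
      if Function.Injective y then f (y 0) * ∏ i, f (y i) else 0 with hDdef
  have hT0 : 0 ≤ T := by
    apply Finset.sum_nonneg
    intro y _
    split
    · exact Finset.prod_nonneg fun i _ => hf _
    · exact le_rfl
  have hD0 : 0 ≤ D := by
    apply Finset.sum_nonneg
    intro y _
    split
    · exact mul_nonneg (hf _) (Finset.prod_nonneg fun i _ => hf _)
    · exact le_rfl
  -- B = S * T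
  have hB : (∑ x : Fin (m + 2) → Fin N, if DistinctFrom 1 x then ∏ i, f (x i) else 0)
      = S * T := by
    rw [key, ← hsum, Finset.sum_mul]
    apply Finset.sum_congr rfl
    intro v _
    rw [hTdef, Finset.mul_sum]
    apply Finset.sum_congr rfl
    intro y _
    rw [mul_ite, mul_zero]
    exact if_congr (hInj1 v y) rfl rfl
  -- the Eq2 sum equals D
  have hDeq : (∑ x : Fin (m + 2) → Fin N,
      if EqOnFirst 2 x ∧ DistinctFrom 1 x then ∏ i, f (x i) else 0) = D := by
    rw [key]
    have : ∀ (v : Fin N) (y : Fin (m + 1) → Fin N),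
        (if EqOnFirst 2 (Fin.cons v y) ∧ DistinctFrom 1 (Fin.cons v y)
          then f v * ∏ i, f (y i) else 0)
        = (if v = y 0 ∧ Function.Injective y then f v * ∏ i, f (y i) else 0) := by
      intro v y
      exact if_congr (hEq2 v y) rfl rfl
    simp only [this]
    rw [Finset.sum_comm, hDdef]
    apply Finset.sum_congr rfl
    intro y _
    by_cases h : Function.Injective y
    · simp [h]
    · simp [h]
  -- swap lemma
  have hswap : ∀ j : Fin (m + 1),
      (∑ y : Fin (m + 1) → Fin N,
        if Function.Injective y then f (y j) * ∏ i, f (y i) else 0) = D := by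
    intro j
    rw [hDdef]
    symm
    set σ := Equiv.swap (0 : Fin (m + 1)) j with hσ
    apply Fintype.sum_equiv (Equiv.arrowCongr σ (Equiv.refl (Fin N)))
    intro y
    have he : (Equiv.arrowCongr σ (Equiv.refl (Fin N))) y = y ∘ ⇑σ.symm := rfl
    rw [he]
    have h0 : (y ∘ ⇑σ.symm) j = y 0 := by
      simp [hσ, Equiv.symm_swap, Equiv.swap_apply_right]
    have hprod : ∏ i, f ((y ∘ ⇑σ.symm) i) = ∏ i, f (y i) :=
      Equiv.prod_comp σ.symm (fun i => f (y i))
    have hinj : Function.Injective (y ∘ ⇑σ.symm) ↔ Function.Injective y :=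
      Equiv.injective_comp σ.symm y
    rw [h0, hprod]
    exact (if_congr hinj rfl rfl).symm
  -- B = A + (m+1) * D
  have hBA : (∑ x : Fin (m + 2) → Fin N, if DistinctFrom 1 x then ∏ i, f (x i) else 0)
      = (∑ x : Fin (m + 2) → Fin N, if DistinctFrom 0 x then ∏ i, f (x i) else 0)
        + (m + 1 : ℝ) * D := by
    rw [key (DistinctFrom 1), key (DistinctFrom 0)]
    have step1 : ∀ (v : Fin N) (y : Fin (m + 1) → Fin N),
        (if DistinctFrom 1 (Fin.cons v y) then f v * ∏ i, f (y i) else 0)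
        = (if DistinctFrom 0 (Fin.cons v y) then f v * ∏ i, f (y i) else 0)
          + (if v ∈ Set.range y ∧ Function.Injective y then f v * ∏ i, f (y i) else 0) := by
      intro v y
      rw [if_congr (hInj1 v y) rfl rfl, if_congr (hInj0 v y) rfl rfl]
      by_cases h : Function.Injective y
      · by_cases hv : v ∈ Set.range y
        · simp [h, hv]
        · simp [h, hv]
      · simp [h]
    simp only [step1]
    simp only [Finset.sum_add_distrib]
    congr 1
    rw [Finset.sum_comm]
    have inner : ∀ y : Fin (m + 1) → Fin N,
        (∑ v : Fin N, if v ∈ Set.range y ∧ Function.Injective y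
            then f v * ∏ i, f (y i) else 0)
        = ∑ j : Fin (m + 1),
            (if Function.Injective y then f (y j) * ∏ i, f (y i) else 0) := by
      intro y
      by_cases h : Function.Injective y
      · simp only [h, and_true, if_true]
        rw [← Finset.sum_filter]
        have himg : Finset.univ.filter (fun v => v ∈ Set.range y)
            = Finset.univ.image y := by
          ext v
          simp [Set.mem_range, eq_comm]
        rw [himg, Finset.sum_image (fun a _ b _ hab => h hab)]
      · simp [h]
    calc (∑ y : Fin (m + 1) → Fin N, ∑ v : Fin N,
            if v ∈ Set.range y ∧ Function.Injective y then f v * ∏ i, f (y i) else 0)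
        = ∑ y : Fin (m + 1) → Fin N, ∑ j : Fin (m + 1),
            (if Function.Injective y then f (y j) * ∏ i, f (y i) else 0) := by
          exact Finset.sum_congr rfl fun y _ => inner y
      _ = ∑ j : Fin (m + 1), ∑ y : Fin (m + 1) → Fin N,
            (if Function.Injective y then f (y j) * ∏ i, f (y i) else 0) :=
          Finset.sum_comm
      _ = ∑ _j : Fin (m + 1), D := Finset.sum_congr rfl fun j _ => hswap j
      _ = (m + 1 : ℝ) * D := by
          rw [Finset.sum_const, Finset.card_univ, Fintype.card_fin, nsmul_eq_mul]
          push_cast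
          ring
  have hrcast : ((m + 2 : ℕ) : ℝ) - 1 = (m + 1 : ℝ) := by push_cast; ring
  constructor
  · rw [hDeq, hrcast]
    linarith [hBA]
  · rw [hDeq, hB, hrcast]
    have hDT : D ≤ M * T := by
      rw [hTdef, Finset.mul_sum]
      apply Finset.sum_le_sum
      intro y _
      by_cases h : Function.Injective y
      · simp only [h, if_true]
        exact mul_le_mul_of_nonneg_right (hmax _) (Finset.prod_nonneg fun i _ => hf _)
      · simp [h]
    have hm1 : (m + 1 : ℝ) ≤ M := by
      have : ((m + 2 : ℕ) : ℝ) ≤ M := hrM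
      push_cast at this
      linarith
    have h1 : (m + 1 : ℝ) * D ≤ M * (M * T) := by
      calc (m + 1 : ℝ) * D ≤ M * D := by
            apply mul_le_mul_of_nonneg_right hm1 hD0
        _ ≤ M * (M * T) := by
            apply mul_le_mul_of_nonneg_left hDT (le_of_lt hM0)
    have hMM : M * M = C ^ 2 * S ^ ((1 : ℝ) - 2 * τ) := by
      rw [hMdef]
      rw [show C * S ^ ((1:ℝ)/2 - τ) * (C * S ^ ((1:ℝ)/2 - τ))
          = C ^ 2 * (S ^ ((1:ℝ)/2 - τ) * S ^ ((1:ℝ)/2 - τ)) by ring,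
        ← Real.rpow_add hS, show (1:ℝ)/2 - τ + ((1:ℝ)/2 - τ) = 1 - 2 * τ by ring]
    have hSS : S ^ (-(2 * τ)) * S = S ^ ((1 : ℝ) - 2 * τ) := by
      rw [show (1:ℝ) - 2 * τ = -(2 * τ) + 1 by ring, Real.rpow_add hS, Real.rpow_one]
    calc (m + 1 : ℝ) * D ≤ M * (M * T) := h1
      _ = C ^ 2 * S ^ (-(2 * τ)) * (S * T) := by
          rw [← mul_assoc, hMM]
          rw [show C ^ 2 * S ^ (-(2*τ)) * (S * T) = C ^ 2 * (S ^ (-(2*τ)) * S) * T by ring,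
            hSS]
end
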